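/- arXiv:1907.01315 — 4 statements merged into one kernel-verified Lean document; each statement's English description precedes it below -/
import Mathlib

section
/- Let S ⊆ ℕ^d be a good semigroup and E a relative good ideal of S. Then g(E) = c_E − l(E). -/
/-- The nonnegative orthant of `ℤ^d`, representing `ℕ^d`. -/
def orthD (d : ℕ) : Set (Fin d → ℤ) := {a | ∀ i, 0 ≤ a i}

/-- Property (G1): closure under componentwise minimum. -/
def MinClosedD {d : ℕ} (E : Set (Fin d → ℤ)) : Prop := ∀ a ∈ E, ∀ b ∈ E, a ⊓ b ∈ E

/-- Property (G3). -/
def G3PD {d : ℕ} (E : Set (Fin d → ℤ)) : Prop :=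
  ∀ a ∈ E, ∀ b ∈ E, a ≠ b → ∀ i, a i = b i →
    ∃ e ∈ E, a i < e i ∧ ∀ j, j ≠ i →
      (min (a j) (b j) ≤ e j ∧ (a j ≠ b j → e j = min (a j) (b j)))

/-- A good semigroup of `ℕ^d` (viewed inside `ℤ^d`). -/
def IsGoodD {d : ℕ} (S : Set (Fin d → ℤ)) : Prop :=
  S ⊆ orthD d ∧ (0 : Fin d → ℤ) ∈ S ∧ (∀ a ∈ S, ∀ b ∈ S, a + b ∈ S) ∧
  MinClosedD S ∧ (∃ δ : Fin d → ℤ, ∀ y, δ ≤ y → y ∈ S) ∧ G3PD S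

/-- A good semigroup is local if its only element with a zero coordinate is `0`. -/
def IsLocalD {d : ℕ} (S : Set (Fin d → ℤ)) : Prop := ∀ a ∈ S, (∃ i, a i = 0) → a = 0

/-- A relative good ideal of `S`. -/
def IsRelGoodIdealD {d : ℕ} (S E : Set (Fin d → ℤ)) : Prop :=
  E.Nonempty ∧ (∀ e ∈ E, ∀ s ∈ S, e + s ∈ E) ∧ (∃ a ∈ S, ∀ e ∈ E, a + e ∈ S) ∧
  MinClosedD E ∧ G3PD E

/-- A saturated chain of length `n` in `E`. -/
def IsSatChainD {d : ℕ} (E : Set (Fin d → ℤ)) (n : ℕ) (f : ℕ → (Fin d → ℤ)) : Prop :=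
  (∀ i ≤ n, f i ∈ E) ∧ (∀ i < n, f i < f (i + 1)) ∧
  (∀ i < n, ∀ c ∈ E, ¬ (f i < c ∧ c < f (i + 1)))

/-- `d_E(a,b)`: the common length of all saturated chains in `E` from `a` to `b`. -/
noncomputable def chainDistD {d : ℕ} (E : Set (Fin d → ℤ)) (a b : Fin d → ℤ) : ℕ :=
  sSup {n : ℕ | ∃ f : ℕ → (Fin d → ℤ), IsSatChainD E n f ∧ f 0 = a ∧ f n = b}

/-- The (componentwise) minimal element `e(E)` of `E`. -/
noncomputable def minElD {d : ℕ} (E : Set (Fin d → ℤ)) : Fin d → ℤ :=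
  fun i => sInf ((fun a => a i) '' E)

/-- The distance `d(E∖F)` between `F ⊆ E`: the common value of
`d_E(e(E),α) - d_F(e(F),α)` for all sufficiently large `α ∈ F`. -/
noncomputable def distD {d : ℕ} (E F : Set (Fin d → ℤ)) : ℤ :=
  sSup {z : ℤ | ∃ β : Fin d → ℤ, ∀ α ∈ F, β ≤ α →
    (chainDistD E (minElD E) α : ℤ) - (chainDistD F (minElD F) α : ℤ) = z}

/-- The conductor `c(E)`: the componentwise minimal `δ` with `δ + ℕ^d ⊆ E`. -/
noncomputable def condD {d : ℕ} (E : Set (Fin d → ℤ)) : Fin d → ℤ :=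
  fun i => sInf ((fun δ => δ i) '' {δ : Fin d → ℤ | ∀ y, δ ≤ y → y ∈ E})

/-- The conductor ideal `C(E) = {β ∈ E : β ≥ c(E)}`. -/
noncomputable def CIdealD {d : ℕ} (E : Set (Fin d → ℤ)) : Set (Fin d → ℤ) :=
  {b ∈ E | condD E ≤ b}

/-- The length `l(E) = d(E ∖ C(E))`. -/
noncomputable def glenD {d : ℕ} (E : Set (Fin d → ℤ)) : ℤ := distD E (CIdealD E)

/-- The genus `g(E) = d(ℕ^d ∖ E)`. -/
noncomputable def genusD {d : ℕ} (E : Set (Fin d → ℤ)) : ℤ := distD (orthD d) E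

/-- `c_E = c₁ + ⋯ + c_d`, the sum of the coordinates of the conductor of `E`. -/
noncomputable def cSumD {d : ℕ} (E : Set (Fin d → ℤ)) : ℤ := ∑ i, condD E i

section AuxProof
variable {d : ℕ} {S E : Set (Fin d → ℤ)}

def sumv (a : Fin d → ℤ) : ℤ := ∑ i, a i

lemma sumv_lt {a b : Fin d → ℤ} (h : a < b) : sumv a < sumv b := by
  rw [Pi.lt_def] at h
  obtain ⟨hle, i, hi⟩ := h
  exact Finset.sum_lt_sum (fun j _ => hle j) ⟨i, Finset.mem_univ i, hi⟩

lemma sumv_le {a b : Fin d → ℤ} (h : a ≤ b) : sumv a ≤ sumv b :=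
  Finset.sum_le_sum (fun j _ => h j)

lemma sumv_update (α : Fin d → ℤ) (i : Fin d) (x : ℤ) :
    sumv (Function.update α i x) = sumv α + x - α i := by
  unfold sumv
  rw [Finset.sum_update_of_mem (Finset.mem_univ i),
    Finset.sum_eq_sum_sdiff_singleton_add (Finset.mem_univ i) α]
  ring

lemma eq_of_le_of_sumv_le {a b : Fin d → ℤ} (h : a ≤ b) (hs : sumv b ≤ sumv a) : a = b := by
  by_contra hne
  exact absurd (sumv_lt (lt_of_le_of_ne h hne)) (not_lt.mpr hs)

/-- A (not necessarily saturated) strictly increasing chain. -/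
def IsChainD (E : Set (Fin d → ℤ)) (n : ℕ) (f : ℕ → (Fin d → ℤ)) : Prop :=
  (∀ i ≤ n, f i ∈ E) ∧ (∀ i < n, f i < f (i + 1))

def csetD (E : Set (Fin d → ℤ)) (a b : Fin d → ℤ) : Set ℕ :=
  {n | ∃ f, IsChainD E n f ∧ f 0 = a ∧ f n = b}

lemma chain_mono {f : ℕ → Fin d → ℤ} {n : ℕ} (hf : ∀ i < n, f i < f (i + 1)) :
    ∀ {i j : ℕ}, i ≤ j → j ≤ n → f i ≤ f j := by
  intro i j hij
  induction j, hij using Nat.le_induction with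
  | base => intro _; exact le_rfl
  | succ k hk ih => intro hkn; exact le_trans (ih (by omega)) (le_of_lt (hf k (by omega)))

lemma chain_card_le {E : Set (Fin d → ℤ)} {n : ℕ} {f : ℕ → Fin d → ℤ}
    (hc : IsChainD E n f) : (n : ℤ) + sumv (f 0) ≤ sumv (f n) := by
  induction n with
  | zero => simp
  | succ m ih =>
    have h1 := ih ⟨fun i hi => hc.1 i (by omega), fun i hi => hc.2 i (by omega)⟩
    have h2 : sumv (f m) < sumv (f (m + 1)) := sumv_lt (hc.2 m (by omega))
    push_cast
    linarith

lemma cset_bdd {E : Set (Fin d → ℤ)} {a b : Fin d → ℤ} : BddAbove (csetD E a b) := by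
  refine ⟨(sumv b - sumv a).toNat, fun n hn => ?_⟩
  obtain ⟨f, hf, h0, hn'⟩ := hn
  have := chain_card_le hf
  rw [h0, hn'] at this
  omega

lemma cset_nonempty {E : Set (Fin d → ℤ)} {a b : Fin d → ℤ}
    (ha : a ∈ E) (hb : b ∈ E) (hab : a ≤ b) : (csetD E a b).Nonempty := by
  rcases eq_or_lt_of_le hab with h | h
  · exact ⟨0, fun _ => a, ⟨fun _ _ => ha, fun i hi => absurd hi (by omega)⟩, rfl, h⟩
  · refine ⟨1, fun k => if k = 0 then a else b, ⟨?_, ?_⟩, by simp, by simp⟩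
    · intro i _; by_cases hi : i = 0 <;> simp [hi, ha, hb]
    · intro i hi
      have : i = 0 := by omega
      simpa [this] using h


lemma chainDist_spec {E : Set (Fin d → ℤ)} {a b : Fin d → ℤ}
    (ha : a ∈ E) (hb : b ∈ E) (hab : a ≤ b) :
    chainDistD E a b ∈ csetD E a b ∧ ∀ n ∈ csetD E a b, n ≤ chainDistD E a b := by
  have hne := cset_nonempty ha hb hab
  have hbdd : BddAbove (csetD E a b) := cset_bdd
  have hmem : sSup (csetD E a b) ∈ csetD E a b := Nat.sSup_mem hne hbdd
  obtain ⟨f, hf, h0, hn⟩ := hmem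
  set n₀ := sSup (csetD E a b) with hn₀
  -- the maximal chain is saturated
  have hsat : ∀ i < n₀, ∀ c ∈ E, ¬ (f i < c ∧ c < f (i + 1)) := by
    rintro i hi c hcE ⟨h1, h2⟩
    set g : ℕ → (Fin d → ℤ) := fun k => if k ≤ i then f k else if k = i + 1 then c else f (k - 1) with hg
    have hgmem : ∀ k ≤ n₀ + 1, g k ∈ E := by
      intro k hk
      by_cases hki : k ≤ i
      · simpa [hg, hki] using hf.1 k (by omega)
      · by_cases hki1 : k = i + 1
        · simpa [hg, hki, hki1] using hcE
        · have : g k = f (k - 1) := by simp [hg, hki, hki1]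
          rw [this]; exact hf.1 (k - 1) (by omega)
    have hgstep : ∀ k < n₀ + 1, g k < g (k + 1) := by
      intro k hk
      rcases lt_trichotomy k i with hki | hki | hki
      · have e1 : g k = f k := by simp [hg, le_of_lt hki]
        have e2 : g (k + 1) = f (k + 1) := by
          have h3 : k + 1 ≤ i := by omega
          simp [hg, h3]
        rw [e1, e2]; exact hf.2 k (by omega)
      · subst hki
        have e1 : g k = f k := by simp [hg]
        have e2 : g (k + 1) = c := by simp [hg]
        rw [e1, e2]; exact h1
      · by_cases hki1 : k = i + 1
        · subst hki1
          have e1 : g (i + 1) = c := by simp [hg]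
          have e2 : g (i + 2) = f (i + 1) := by
            have : ¬ (i + 2 ≤ i) := by omega
            simp [hg, this]
          rw [e1, e2]; exact h2
        · have e1 : g k = f (k - 1) := by
            have h3 : ¬ (k ≤ i) := by omega
            simp [hg, h3, hki1]
          have e2 : g (k + 1) = f k := by
            have h3 : ¬ (k + 1 ≤ i) := by omega
            have h4 : ¬ (k + 1 = i + 1) := by omega
            have h5 : k ≠ i := by omega
            simp [hg, h3, h4, h5]
          rw [e1, e2]
          have : f (k - 1) < f (k - 1 + 1) := hf.2 (k - 1) (by omega)
          have e3 : k - 1 + 1 = k := by omega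
          rwa [e3] at this
    have hmem' : n₀ + 1 ∈ csetD E a b := by
      refine ⟨g, ⟨hgmem, hgstep⟩, ?_, ?_⟩
      · have : (0 : ℕ) ≤ i := by omega
        simpa [hg, this] using h0
      · have h3 : ¬ (n₀ + 1 ≤ i) := by omega
        have h4 : ¬ (n₀ + 1 = i + 1) := by omega
        have h5 : n₀ ≠ i := by omega
        simpa [hg, h3, h4, h5] using hn
    have := le_csSup hbdd hmem'
    omega
  have hsatmem : n₀ ∈ {n : ℕ | ∃ f : ℕ → (Fin d → ℤ), IsSatChainD E n f ∧ f 0 = a ∧ f n = b} :=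
    ⟨f, ⟨hf.1, hf.2, hsat⟩, h0, hn⟩
  have hsub : {n : ℕ | ∃ f : ℕ → (Fin d → ℤ), IsSatChainD E n f ∧ f 0 = a ∧ f n = b} ⊆ csetD E a b := by
    rintro n ⟨g, hg, hg0, hgn⟩
    exact ⟨g, ⟨hg.1, hg.2.1⟩, hg0, hgn⟩
  have heq : chainDistD E a b = n₀ := by
    apply le_antisymm
    · exact csSup_le ⟨n₀, hsatmem⟩ (fun n hn' => le_csSup hbdd (hsub hn'))
    · exact le_csSup (hbdd.mono hsub) hsatmem
  constructor
  · rw [heq]; exact ⟨f, hf, h0, hn⟩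
  · intro n hn'
    rw [heq]
    exact le_csSup hbdd hn'

lemma le_update_succ (α : Fin d → ℤ) (i : Fin d) : α ≤ Function.update α i (α i + 1) := by
  intro j
  rcases eq_or_ne j i with h | h
  · subst h; simp
  · simp [Function.update_apply, h]

lemma lt_update_succ (α : Fin d → ℤ) (i : Fin d) : α < Function.update α i (α i + 1) := by
  rw [Pi.lt_def]
  exact ⟨le_update_succ α i, i, by simp⟩

/-- appending one element to a chain -/
lemma cset_append {E : Set (Fin d → ℤ)} {a b' b : Fin d → ℤ} {n : ℕ}
    (h : n ∈ csetD E a b') (hlt : b' < b) (hbE : b ∈ E) : n + 1 ∈ csetD E a b := by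
  obtain ⟨f, hf, h0, hn⟩ := h
  refine ⟨fun k => if k ≤ n then f k else b, ⟨?_, ?_⟩, by simpa using h0, by simp⟩
  · intro k hk
    by_cases hkn : k ≤ n
    · simpa [hkn] using hf.1 k hkn
    · simpa [hkn] using hbE
  · intro k hk
    rcases lt_or_ge k n with hkn | hkn
    · have h1 : k ≤ n := by omega
      have h2 : k + 1 ≤ n := by omega
      simpa [h1, h2] using hf.2 k hkn
    · have hkn' : k = n := by omega
      subst hkn'
      have h2 : ¬ (k + 1 ≤ k) := by omega
      simpa [h2, hn] using hlt

lemma interval_chain_exists {F : Set (Fin d → ℤ)} {a : Fin d → ℤ}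
    (hF : ∀ y, a ≤ y → y ∈ F) :
    ∀ n : ℕ, ∀ b, a ≤ b → sumv b - sumv a = n → n ∈ csetD F a b := by
  intro n
  induction n with
  | zero =>
    intro b hab hs
    have hba : b = a := (eq_of_le_of_sumv_le hab (by omega)).symm
    subst hba
    exact ⟨fun _ => b, ⟨fun _ _ => hF b hab, fun i hi => absurd hi (by omega)⟩, rfl, rfl⟩
  | succ m ih =>
    intro b hab hs
    have hex : ∃ i, a i < b i := by
      by_contra hno
      push_neg at hno
      have : b = a := funext (fun i => le_antisymm (hno i) (hab i))
      rw [this] at hs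
      omega
    obtain ⟨i, hi⟩ := hex
    set b' := Function.update b i (b i - 1) with hb'
    have hab' : a ≤ b' := by
      intro j
      rcases eq_or_ne j i with h | h
      · subst h; simp [hb']; omega
      · simp [hb', Function.update_apply, h]; exact hab j
    have hs' : sumv b' - sumv a = m := by
      rw [hb', sumv_update]
      omega
    have hb'b : b' < b := by
      rw [Pi.lt_def]
      constructor
      · intro j
        rcases eq_or_ne j i with h | h
        · subst h; simp [hb']
        · simp [hb', Function.update_apply, h]
      · exact ⟨i, by simp [hb']⟩
    exact cset_append (ih b' hab' hs') hb'b (hF b hab)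

lemma chainDist_interval {F : Set (Fin d → ℤ)} {a b : Fin d → ℤ}
    (hF : ∀ y, a ≤ y → y ∈ F) (hab : a ≤ b) :
    (chainDistD F a b : ℤ) = sumv b - sumv a := by
  obtain ⟨hmem, hub⟩ := chainDist_spec (hF a le_rfl) (hF b hab) hab
  have hnn : (0 : ℤ) ≤ sumv b - sumv a := by have := sumv_le hab; omega
  have h1 : (sumv b - sumv a).toNat ∈ csetD F a b :=
    interval_chain_exists hF _ b hab (by omega)
  have h2 := hub _ h1
  obtain ⟨f, hf, h0, hn⟩ := hmem
  have h3 := chain_card_le hf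
  rw [h0, hn] at h3
  omega

/-- every element of E is bounded below by -a where a+E ⊆ S ⊆ orthant -/
lemma lower_bound (hS : IsGoodD S) (hE : IsRelGoodIdealD S E) :
    ∃ m : Fin d → ℤ, ∀ e ∈ E, m ≤ e := by
  obtain ⟨a, _, haE⟩ := hE.2.2.1
  refine ⟨-a, fun e he j => ?_⟩
  have := hS.1 (haE e he) j
  simp only [Pi.add_apply] at this
  simp only [Pi.neg_apply]
  omega

/-- the set of conductor candidates -/
lemma cand_nonempty (hS : IsGoodD S) (hE : IsRelGoodIdealD S E) :
    ∃ δ : Fin d → ℤ, ∀ y, δ ≤ y → y ∈ E := by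
  obtain ⟨e₀, he₀⟩ := hE.1
  obtain ⟨δS, hδS⟩ := hS.2.2.2.2.1
  refine ⟨e₀ + δS, fun y hy => ?_⟩
  have h1 : y - e₀ ∈ S := by
    apply hδS
    intro j
    have := hy j
    simp only [Pi.add_apply] at this
    simp only [Pi.sub_apply]
    omega
  have := hE.2.1 e₀ he₀ _ h1
  have h2 : e₀ + (y - e₀) = y := by ring
  rwa [h2] at this

lemma cand_mem_E {δ : Fin d → ℤ} (h : ∀ y, δ ≤ y → y ∈ E) : δ ∈ E := h δ le_rfl

lemma cond_attain (hS : IsGoodD S) (hE : IsRelGoodIdealD S E) (i : Fin d) :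
    ∃ δ : Fin d → ℤ, (∀ y, δ ≤ y → y ∈ E) ∧ δ i = condD E i := by
  obtain ⟨m, hm⟩ := lower_bound hS hE
  obtain ⟨δ₀, hδ₀⟩ := cand_nonempty hS hE
  have hne : ((fun δ => δ i) '' {δ : Fin d → ℤ | ∀ y, δ ≤ y → y ∈ E}).Nonempty :=
    ⟨δ₀ i, δ₀, hδ₀, rfl⟩
  have hbdd : BddBelow ((fun δ => δ i) '' {δ : Fin d → ℤ | ∀ y, δ ≤ y → y ∈ E}) := by
    refine ⟨m i, ?_⟩
    rintro z ⟨δ, hδ, rfl⟩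
    exact hm δ (cand_mem_E hδ) i
  have := Int.csInf_mem hne hbdd
  obtain ⟨δ, hδ, hδi⟩ := this
  exact ⟨δ, hδ, hδi⟩

/-- the componentwise infimum of conductors is a conductor -/
lemma cond_is_cond (hS : IsGoodD S) (hE : IsRelGoodIdealD S E) :
    ∀ y, condD E ≤ y → y ∈ E := by
  intro y hy
  rcases Nat.eq_zero_or_pos d with hd | hd
  · subst hd
    obtain ⟨e₀, he₀⟩ := hE.1
    have : y = e₀ := funext (fun i => i.elim0)
    rwa [this]
  · haveI : Nonempty (Fin d) := ⟨⟨0, hd⟩⟩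
    choose δf hδf1 hδf2 using cond_attain hS hE
    set z : Fin d → (Fin d → ℤ) := fun i => δf i ⊔ y with hz
    have hzE : ∀ i, z i ∈ E := fun i => hδf1 i _ le_sup_left
    have hwE : (Finset.univ.inf' Finset.univ_nonempty z) ∈ E :=
      Finset.inf'_mem E hE.2.2.2.1 _ _ z (fun i _ => hzE i)
    have hwy : Finset.univ.inf' Finset.univ_nonempty z = y := by
      funext j
      rw [Finset.inf'_apply]
      apply le_antisymm
      · refine le_trans (Finset.inf'_le _ (Finset.mem_univ j)) ?_
        have : δf j j ≤ y j := by rw [hδf2 j]; exact hy j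
        simp [hz, sup_eq_right.mpr this]
      · exact Finset.le_inf' _ _ (fun i _ => by simp [hz])
    rwa [hwy] at hwE

lemma cond_mem_E (hS : IsGoodD S) (hE : IsRelGoodIdealD S E) : condD E ∈ E :=
  cond_is_cond hS hE _ le_rfl

lemma minEl_le (hS : IsGoodD S) (hE : IsRelGoodIdealD S E) :
    ∀ α ∈ E, minElD E ≤ α := by
  obtain ⟨m, hm⟩ := lower_bound hS hE
  intro α hα i
  exact csInf_le ⟨m i, by rintro z ⟨e, he, rfl⟩; exact hm e he i⟩ ⟨α, hα, rfl⟩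

lemma minEl_mem (hS : IsGoodD S) (hE : IsRelGoodIdealD S E) : minElD E ∈ E := by
  rcases Nat.eq_zero_or_pos d with hd | hd
  · subst hd
    obtain ⟨e₀, he₀⟩ := hE.1
    have : minElD E = e₀ := funext (fun i => i.elim0)
    rwa [this]
  · haveI : Nonempty (Fin d) := ⟨⟨0, hd⟩⟩
    obtain ⟨m, hm⟩ := lower_bound hS hE
    have hatt : ∀ i : Fin d, ∃ a, a ∈ E ∧ a i = minElD E i := by
      intro i
      have hne : ((fun a => a i) '' E).Nonempty := ⟨(hE.1.some) i, hE.1.some, hE.1.some_mem, rfl⟩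
      have hbdd : BddBelow ((fun a => a i) '' E) :=
        ⟨m i, by rintro z ⟨e, he, rfl⟩; exact hm e he i⟩
      obtain ⟨a, ha, hai⟩ := Int.csInf_mem hne hbdd
      exact ⟨a, ha, hai⟩
    choose af haf1 haf2 using hatt
    have hwE : (Finset.univ.inf' Finset.univ_nonempty af) ∈ E :=
      Finset.inf'_mem E hE.2.2.2.1 _ _ af (fun i _ => haf1 i)
    have hw : Finset.univ.inf' Finset.univ_nonempty af = minElD E := by
      funext j
      rw [Finset.inf'_apply]
      apply le_antisymm
      · rw [← haf2 j]; exact Finset.inf'_le _ (Finset.mem_univ j)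
      · exact Finset.le_inf' _ _ (fun i _ => minEl_le hS hE (af i) (haf1 i) j)
    rwa [hw] at hwE

lemma minEl_orth : minElD (orthD d) = 0 := by
  funext i
  apply le_antisymm
  · refine csInf_le ?_ ?_
    · exact ⟨0, by rintro z ⟨a, ha, rfl⟩; exact ha i⟩
    · exact ⟨0, fun j => le_rfl, rfl⟩
  · refine le_csInf ⟨0, 0, fun j => le_rfl, rfl⟩ ?_
    rintro z ⟨a, ha, rfl⟩; exact ha i

lemma CIdeal_eq (hS : IsGoodD S) (hE : IsRelGoodIdealD S E) :
    CIdealD E = {b | condD E ≤ b} := by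
  ext b
  constructor
  · exact fun hb => hb.2
  · exact fun hb => ⟨cond_is_cond hS hE b hb, hb⟩

lemma minEl_CIdeal (hS : IsGoodD S) (hE : IsRelGoodIdealD S E) :
    minElD (CIdealD E) = condD E := by
  have hC := CIdeal_eq hS hE
  funext i
  apply le_antisymm
  · refine csInf_le ?_ ?_
    · refine ⟨condD E i, ?_⟩
      rintro z ⟨b, hb, rfl⟩
      rw [hC] at hb
      exact hb i
    · exact ⟨condD E, by rw [hC]; exact Set.mem_setOf_eq ▸ le_rfl, rfl⟩
  · refine le_csInf ⟨condD E i, condD E, by rw [hC]; exact Set.mem_setOf_eq ▸ le_rfl, rfl⟩ ?_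
    rintro z ⟨b, hb, rfl⟩
    rw [hC] at hb
    exact hb i

lemma step_lemma {E : Set (Fin d → ℤ)} {e c α : Fin d → ℤ}
    (hmin : MinClosedD E) (hcond : ∀ y, c ≤ y → y ∈ E)
    (heE : e ∈ E) (hele : ∀ β ∈ E, e ≤ β)
    (hαE : α ∈ E) (hαc : c ≤ α) (i : Fin d) :
    chainDistD E e (Function.update α i (α i + 1)) = chainDistD E e α + 1 := by
  set α' := Function.update α i (α i + 1) with hα'def
  have hαα' : α < α' := lt_update_succ α i
  have hα'E : α' ∈ E := hcond α' (le_trans hαc (le_of_lt hαα'))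
  have heα : e ≤ α := hele α hαE
  have heα' : e ≤ α' := le_trans heα (le_of_lt hαα')
  obtain ⟨hmem, hub⟩ := chainDist_spec heE hαE heα
  obtain ⟨hmem', hub'⟩ := chainDist_spec heE hα'E heα'
  apply le_antisymm
  · -- chainDistD E e α' ≤ chainDistD E e α + 1
    obtain ⟨f, hf, h0, hn⟩ := hmem'
    set n := chainDistD E e α' with hndef
    set g : ℕ → (Fin d → ℤ) := fun k => f k ⊓ α with hg
    have hgmem : ∀ k ≤ n, g k ∈ E := fun k hk => hmin _ (hf.1 k hk) _ hαE
    have hg0 : g 0 = e := by rw [hg]; simp only; rw [h0]; exact inf_eq_left.mpr heα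
    have hgn : g n = α := by rw [hg]; simp only; rw [hn]; exact inf_eq_right.mpr (le_of_lt hαα')
    have hgmono : ∀ k < n, g k ≤ g (k + 1) :=
      fun k hk => inf_le_inf_right α (le_of_lt (hf.2 k hk))
    -- analysis of collapses
    have hfub : ∀ m ≤ n, f m ≤ α' := fun m hm => hn ▸ chain_mono hf.2 hm le_rfl
    have hcollapse : ∀ k < n, g k = g (k + 1) → f k i = α i ∧ f (k + 1) i = α i + 1 := by
      intro k hk hgk
      have hstep := hf.2 k hk
      have hlek : f k ≤ α' := hfub k (by omega)
      have hlek1 : f (k + 1) ≤ α' := hfub (k + 1) (by omega)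
      have hoffi : ∀ j, j ≠ i → f k j = f (k + 1) j := by
        intro j hj
        have h1 : f k j ≤ α j := by
          have := hlek j
          rwa [hα'def, Function.update_apply, if_neg hj] at this
        have h2 : f (k + 1) j ≤ α j := by
          have := hlek1 j
          rwa [hα'def, Function.update_apply, if_neg hj] at this
        have := congrFun hgk j
        simp only [hg, Pi.inf_apply] at this
        rw [min_eq_left h1, min_eq_left h2] at this
        exact this
      have hfki : f k i < f (k + 1) i := by
        rcases lt_or_ge (f k i) (f (k + 1) i) with h | h
        · exact h
        · exfalso
          have : f k = f (k + 1) := by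
            funext j
            rcases eq_or_ne j i with hj | hj
            · subst hj; exact le_antisymm (hstep.le j) h
            · exact hoffi j hj
          exact absurd this (ne_of_lt hstep)
      have hgi := congrFun hgk i
      simp only [hg, Pi.inf_apply] at hgi
      have hki : α i ≤ f k i := by
        by_contra h
        push_neg at h
        rw [min_eq_left (le_of_lt h)] at hgi
        have : f k i < min (f (k + 1) i) (α i) := lt_min hfki h
        omega
      have hub1 : f k i ≤ α i + 1 := by
        have := hlek i
        rwa [hα'def, Function.update_self] at this
      have hub2 : f (k + 1) i ≤ α i + 1 := by
        have := hlek1 i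
        rwa [hα'def, Function.update_self] at this
      have hfki' : f k i = α i := by omega
      exact ⟨hfki', by omega⟩
    -- conclude n ≤ N + 1
    by_cases hcoll : ∃ k, k < n ∧ g k = g (k + 1)
    · obtain ⟨k₀, hk₀, hgk₀⟩ := hcoll
      have hstrict : ∀ k < n, k ≠ k₀ → g k < g (k + 1) := by
        intro k hk hkne
        refine lt_of_le_of_ne (hgmono k hk) ?_
        intro hgeq
        rcases lt_or_gt_of_ne hkne with h | h
        · have h1 := (hcollapse k hk hgeq).2
          have h2 := (hcollapse k₀ hk₀ hgk₀).1
          have h3 : f (k + 1) ≤ f k₀ := chain_mono hf.2 (i := k + 1) (j := k₀) (by omega) (by omega)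
          have h4 := h3 i
          linarith [h1, h2, h4]
        · have h1 := (hcollapse k₀ hk₀ hgk₀).2
          have h2 := (hcollapse k hk hgeq).1
          have h3 : f (k₀ + 1) ≤ f k := chain_mono hf.2 (i := k₀ + 1) (j := k) (by omega) (by omega)
          have h4 := h3 i
          linarith [h1, h2, h4]
      set h : ℕ → (Fin d → ℤ) := fun k => if k ≤ k₀ then g k else g (k + 1) with hh
      have hmem1 : n - 1 ∈ csetD E e α := by
        refine ⟨h, ⟨?_, ?_⟩, ?_, ?_⟩
        · intro k hk
          by_cases hkk : k ≤ k₀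
          · simpa [hh, hkk] using hgmem k (by omega)
          · simpa [hh, hkk] using hgmem (k + 1) (by omega)
        · intro k hk
          rcases lt_trichotomy k k₀ with hkk | hkk | hkk
          · have e1 : h k = g k := by simp [hh, le_of_lt hkk]
            have e2 : h (k + 1) = g (k + 1) := by
              have h4 : k + 1 ≤ k₀ := hkk
              simp [hh, h4]
            rw [e1, e2]
            exact hstrict k (by omega) (by omega)
          · subst hkk
            have e1 : h k = g k := by simp [hh]
            have e2 : h (k + 1) = g (k + 2) := by
              have : ¬ (k + 1 ≤ k) := by omega
              simp [hh, this]
            rw [e1, e2, hgk₀]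
            exact hstrict (k + 1) (by omega) (by omega)
          · have e1 : h k = g (k + 1) := by
              have : ¬ (k ≤ k₀) := by omega
              simp [hh, this]
            have e2 : h (k + 1) = g (k + 2) := by
              have : ¬ (k + 1 ≤ k₀) := by omega
              simp [hh, this]
            rw [e1, e2]
            exact hstrict (k + 1) (by omega) (by omega)
        · have : (0 : ℕ) ≤ k₀ := by omega
          simpa [hh, this] using hg0
        · by_cases hkk : n - 1 ≤ k₀
          · have hk₀n : k₀ = n - 1 := by omega
            have e1 : h (n - 1) = g (n - 1) := by simp [hh, hkk]
            have hnpos : 0 < n := lt_of_le_of_lt (Nat.zero_le k₀) hk₀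
            rw [e1, ← hgn]
            rw [hk₀n] at hgk₀
            rw [hgk₀, Nat.sub_add_cancel hnpos]
          · have hnpos : 0 < n := lt_of_le_of_lt (Nat.zero_le k₀) hk₀
            have e1 : h (n - 1) = g (n - 1 + 1) := by simp [hh, hkk]
            rw [e1, Nat.sub_add_cancel hnpos, hgn]
      have := hub _ hmem1
      omega
    · push_neg at hcoll
      have hmem1 : n ∈ csetD E e α := by
        refine ⟨g, ⟨hgmem, ?_⟩, hg0, hgn⟩
        intro k hk
        exact lt_of_le_of_ne (hgmono k hk) (hcoll k hk)
      have := hub _ hmem1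
      omega
  · -- chainDistD E e α + 1 ≤ chainDistD E e α'
    obtain ⟨f, hf, h0, hn⟩ := hmem
    have : chainDistD E e α + 1 ∈ csetD E e α' :=
      cset_append ⟨f, hf, h0, hn⟩ hαα' hα'E
    exact hub' _ this

lemma chainDist_linear {E : Set (Fin d → ℤ)} {e c : Fin d → ℤ}
    (hmin : MinClosedD E) (hcond : ∀ y, c ≤ y → y ∈ E)
    (heE : e ∈ E) (hele : ∀ β ∈ E, e ≤ β) :
    ∀ α, c ≤ α → (chainDistD E e α : ℤ) = (chainDistD E e c : ℤ) + (sumv α - sumv c) := by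
  have key : ∀ n : ℕ, ∀ α, c ≤ α → sumv α - sumv c = n →
      (chainDistD E e α : ℤ) = (chainDistD E e c : ℤ) + n := by
    intro n
    induction n with
    | zero =>
      intro α hcα hs
      have : c = α := eq_of_le_of_sumv_le hcα (by omega)
      rw [← this]
      simp
    | succ m ih =>
      intro α hcα hs
      have hex : ∃ i, c i < α i := by
        by_contra hno
        push_neg at hno
        have : c = α := funext (fun i => le_antisymm (hcα i) (hno i))
        rw [← this] at hs
        omega
      obtain ⟨i, hi⟩ := hex
      set α₀ := Function.update α i (α i - 1) with hα₀
      have hcα₀ : c ≤ α₀ := by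
        intro j
        rcases eq_or_ne j i with h | h
        · subst h; simp [hα₀]; omega
        · simp [hα₀, Function.update_apply, h]; exact hcα j
      have hs₀ : sumv α₀ - sumv c = m := by
        rw [hα₀, sumv_update]; omega
      have hstep := step_lemma hmin hcond heE hele (hcond α₀ hcα₀) hcα₀ i
      have hupd : Function.update α₀ i (α₀ i + 1) = α := by
        funext j
        rcases eq_or_ne j i with h | h
        · subst h; simp [hα₀]
        · simp [hα₀, Function.update_apply, h]
      rw [hupd] at hstep
      rw [hstep]
      push_cast
      rw [ih α₀ hcα₀ hs₀]
      push_cast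
      ring
  intro α hcα
  have hnn : (0:ℤ) ≤ sumv α - sumv c := by have := sumv_le hcα; omega
  have := key (sumv α - sumv c).toNat α hcα (by omega)
  rw [this]
  omega

lemma distD_eq {E F : Set (Fin d → ℤ)} {z₀ : ℤ} (β₀ : Fin d → ℤ)
    (hex : ∀ β : Fin d → ℤ, ∃ α ∈ F, β ≤ α)
    (h : ∀ α ∈ F, β₀ ≤ α → (chainDistD E (minElD E) α : ℤ) - (chainDistD F (minElD F) α : ℤ) = z₀) :
    distD E F = z₀ := by
  unfold distD
  have hset : {z : ℤ | ∃ β : Fin d → ℤ, ∀ α ∈ F, β ≤ α →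
      (chainDistD E (minElD E) α : ℤ) - (chainDistD F (minElD F) α : ℤ) = z} = {z₀} := by
    ext z
    simp only [Set.mem_setOf_eq, Set.mem_singleton_iff]
    constructor
    · rintro ⟨β, hβ⟩
      obtain ⟨α, hαF, hα⟩ := hex (β ⊔ β₀)
      have h1 := hβ α hαF (le_trans le_sup_left hα)
      have h2 := h α hαF (le_trans le_sup_right hα)
      omega
    · rintro rfl
      exact ⟨β₀, h⟩
  rw [hset, csSup_singleton]

end AuxProof

/-- Let `S ⊆ ℕ^d` be a good semigroup and `E` a relative good
ideal of `S`. Then `g(E) = c_E − l(E)`. -/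
theorem genus_eq_condSum_sub_length {d : ℕ} (S E : Set (Fin d → ℤ))
    (hS : IsGoodD S) (hE : IsRelGoodIdealD S E) :
    genusD E = cSumD E - glenD E := by
  have hcond := cond_is_cond hS hE
  have heE := minEl_mem hS hE
  have hele := minEl_le hS hE
  have horth : ∀ y : Fin d → ℤ, (0 : Fin d → ℤ) ≤ y → y ∈ orthD d := fun y hy i => hy i
  have hCint : ∀ y, condD E ≤ y → y ∈ CIdealD E := fun y hy => ⟨hcond y hy, hy⟩
  have hNE := chainDist_linear hE.2.2.2.1 hcond heE hele
  have hgen : genusD E = sumv (condD E) - (chainDistD E (minElD E) (condD E) : ℤ) := by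
    unfold genusD
    apply distD_eq (0 ⊔ condD E)
    · intro β; exact ⟨β ⊔ condD E, hcond _ le_sup_right, le_sup_left⟩
    · intro α hαE hα
      have h0α : (0 : Fin d → ℤ) ≤ α := le_trans le_sup_left hα
      have hcα : condD E ≤ α := le_trans le_sup_right hα
      have h1 : (chainDistD (orthD d) (minElD (orthD d)) α : ℤ) = sumv α := by
        rw [minEl_orth]
        rw [chainDist_interval horth h0α]
        simp [sumv]
      rw [h1, hNE α hcα]
      ring
  have hlen : glenD E = (chainDistD E (minElD E) (condD E) : ℤ) := by
    unfold glenD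
    apply distD_eq (condD E)
    · intro β; exact ⟨β ⊔ condD E, hCint _ le_sup_right, le_sup_left⟩
    · intro α hαC hα
      obtain ⟨hαE, hcα⟩ := hαC
      have h2 : (chainDistD (CIdealD E) (minElD (CIdealD E)) α : ℤ) = sumv α - sumv (condD E) := by
        rw [minEl_CIdeal hS hE]
        exact chainDist_interval hCint hcα
      rw [h2, hNE α hcα]
      ring
  have hcsum : cSumD E = sumv (condD E) := rfl
  rw [hgen, hlen, hcsum]
end

section
/- Let S ⊆ ℕ^d be a good semigroup with conductor c(S) = (c₁,…,c_d) and let U ⊆ {1,…,d}. Then the set E^U = {α = (α₁,…,α_d) ∈ S : α_j ≥ c_j for all j ∉ U} is a relative good ideal of S. -/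
/-- The key property of the conductor: every `y ≥ condD S` lies in `S`. -/
lemma condD_prop {d : ℕ} (S : Set (Fin d → ℤ)) (hS : IsGoodD S) :
    ∀ y, condD S ≤ y → y ∈ S := by
  obtain ⟨hOrth, h0, hAdd, hMin, ⟨δ0, hδ0⟩, hG3⟩ := hS
  set T : Set (Fin d → ℤ) := {δ | ∀ y, δ ≤ y → y ∈ S} with hT
  have hT0 : δ0 ∈ T := hδ0
  have hnonneg : ∀ δ ∈ T, ∀ i, 0 ≤ δ i := by
    intro δ hδ i
    have hy : δ ≤ fun j => if j = i then δ i else δ j ⊔ 0 := by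
      intro j; by_cases h : j = i <;> simp [h]
    have := hOrth (hδ _ hy) i
    simpa using this
  have hbdd : ∀ i, BddBelow ((fun a => a i) '' T) := by
    intro i; exact ⟨0, by rintro x ⟨δ, hδ, rfl⟩; exact hnonneg δ hδ i⟩
  have hne : ∀ i, ((fun a => a i) '' T).Nonempty := fun i => ⟨δ0 i, δ0, hT0, rfl⟩
  have hcle : ∀ δ ∈ T, ∀ i, condD S i ≤ δ i := by
    intro δ hδ i; exact csInf_le (hbdd i) ⟨δ, hδ, rfl⟩
  have hattain : ∀ i, ∃ δ ∈ T, δ i = condD S i := by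
    intro i
    obtain ⟨δ, hδ, hδi⟩ := Int.csInf_mem (hne i) (hbdd i)
    exact ⟨δ, hδ, hδi⟩
  have hTmin : ∀ δ₁ ∈ T, ∀ δ₂ ∈ T, δ₁ ⊓ δ₂ ∈ T := by
    intro δ₁ h₁ δ₂ h₂ y hy
    have h1 : y ⊔ δ₁ ∈ S := h₁ _ le_sup_right
    have h2 : y ⊔ δ₂ ∈ S := h₂ _ le_sup_right
    have hm := hMin _ h1 _ h2
    have heq : (y ⊔ δ₁) ⊓ (y ⊔ δ₂) = y := by
      funext i
      have := hy i
      simp only [Pi.inf_apply, Pi.sup_apply] at *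
      omega
    rwa [heq] at hm
  have key : ∀ F : Finset (Fin d), ∃ δ ∈ T, ∀ i ∈ F, δ i = condD S i := by
    intro F
    induction F using Finset.induction with
    | empty => exact ⟨δ0, hT0, by simp⟩
    | @insert j F hj ih =>
      obtain ⟨δ₁, hδ₁, hδ₁F⟩ := ih
      obtain ⟨δ₂, hδ₂, hδ₂j⟩ := hattain j
      refine ⟨δ₁ ⊓ δ₂, hTmin _ hδ₁ _ hδ₂, ?_⟩
      intro i hi
      rcases Finset.mem_insert.mp hi with rfl | hi
      · have h1 := hcle δ₁ hδ₁ i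
        simp only [Pi.inf_apply]; omega
      · have h1 := hcle δ₂ hδ₂ i
        have h2 := hδ₁F i hi
        simp only [Pi.inf_apply]; omega
  obtain ⟨δ, hδ, hδall⟩ := key Finset.univ
  have hcd : condD S = δ := funext fun i => (hδall i (Finset.mem_univ i)).symm
  rw [hcd]; exact hδ

/-- For a good semigroup `S ⊆ ℕ^d` with conductor
`c(S) = (c₁,…,c_d)` and `U ⊆ {1,…,d}`, the set
`E^U = {α ∈ S : α_j ≥ c_j for all j ∉ U}` is a relative good ideal of `S`. -/
theorem EU_isRelGoodIdeal {d : ℕ} (S : Set (Fin d → ℤ)) (hS : IsGoodD S)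
    (U : Set (Fin d)) :
    IsRelGoodIdealD S {a ∈ S | ∀ j, j ∉ U → condD S j ≤ a j} := by
  have hc : ∀ y, condD S ≤ y → y ∈ S := condD_prop S hS
  obtain ⟨hOrth, h0, hAdd, hMin, hG2, hG3⟩ := hS
  refine ⟨⟨condD S, ⟨hc _ le_rfl, fun j _ => le_rfl⟩⟩, ?_, ⟨0, h0, fun e he => by simpa using he.1⟩,
    ?_, ?_⟩
  · rintro e ⟨heS, heU⟩ s hs
    refine ⟨hAdd e heS s hs, fun j hj => ?_⟩
    have h1 := heU j hj
    have h2 := hOrth hs j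
    simp only [Pi.add_apply]; omega
  · rintro a ⟨haS, haU⟩ b ⟨hbS, hbU⟩
    refine ⟨hMin a haS b hbS, fun j hj => ?_⟩
    have h1 := haU j hj
    have h2 := hbU j hj
    simp only [Pi.inf_apply]; omega
  · rintro a ⟨haS, haU⟩ b ⟨hbS, hbU⟩ hab i hi
    obtain ⟨e, heS, hei, hej⟩ := hG3 a haS b hbS hab i hi
    refine ⟨e, ⟨heS, fun j hj => ?_⟩, hei, hej⟩
    by_cases hji : j = i
    · subst hji
      have := haU j hj
      omega
    · have h1 := (hej j hji).1
      have h2 := haU j hj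
      have h3 := hbU j hj
      omega
end

section
/- Let S ⊆ ℕ^d be a local good semigroup with conductor c(S) = (c₁,…,c_d). For each i ∈ {1,…,d} let P_i = {a ∈ ℕ : a < c_i and there exists β ∈ S with β_i = a and β_j = c_j for all j < i}. Then l(S) = Σ_{i=1}^d |P_i| and g(S) = Σ_{i=1}^d (c_i − |P_i|). -/
namespace GoodAux
open Classical

variable {d : ℕ}

lemma exists_lt_coord {a b : Fin d → ℤ} (h : a < b) : ∃ i, a i < b i := by
  obtain ⟨hle, hne⟩ := lt_iff_le_and_ne.1 h
  by_contra hc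
  push_neg at hc
  exact hne (funext fun i => le_antisymm (hle i) (hc i))

lemma sumgap_nonneg {a b : Fin d → ℤ} (h : a ≤ b) : 0 ≤ ∑ i, (b i - a i) :=
  Finset.sum_nonneg fun i _ => sub_nonneg.2 (h i)

lemma sumgap_pos {a b : Fin d → ℤ} (h : a < b) : 0 < ∑ i, (b i - a i) := by
  obtain ⟨i, hi⟩ := exists_lt_coord h
  have hle := h.le
  calc (0:ℤ) < b i - a i := by omega
    _ ≤ ∑ j, (b j - a j) :=
      Finset.single_le_sum (f := fun j => b j - a j)
        (fun j _ => sub_nonneg.2 (hle j)) (Finset.mem_univ i)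

lemma sumgap_add {a b c : Fin d → ℤ} :
    (∑ i, (b i - a i)) + (∑ i, (c i - b i)) = ∑ i, (c i - a i) := by
  rw [← Finset.sum_add_distrib]; apply Finset.sum_congr rfl; intros; ring

lemma chain_mono {E : Set (Fin d → ℤ)} {n : ℕ} {f : ℕ → Fin d → ℤ}
    (hf : IsSatChainD E n f) : ∀ i j, i ≤ j → j ≤ n → f i ≤ f j := by
  intro i j hij hjn
  induction j with
  | zero => simp_all
  | succ k ih =>
    rcases Nat.eq_or_lt_of_le hij with h | h
    · rw [h]
    · exact le_trans (ih (Nat.lt_succ_iff.1 h) (le_of_lt hjn))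
        (hf.2.1 k hjn).le

lemma chain_len_le {E : Set (Fin d → ℤ)} {n : ℕ} {f : ℕ → Fin d → ℤ}
    (hf : IsSatChainD E n f) : (n : ℤ) ≤ ∑ i, (f n i - f 0 i) := by
  induction n with
  | zero => simp
  | succ k ih =>
    have hf' : IsSatChainD E k f :=
      ⟨fun i hi => hf.1 i (by omega), fun i hi => hf.2.1 i (by omega),
       fun i hi => hf.2.2 i (by omega)⟩
    have h1 : 0 < ∑ i, (f (k+1) i - f k i) := sumgap_pos (hf.2.1 k (by omega))
    have h2 := ih hf'
    have h3 : (∑ i, (f k i - f 0 i)) + (∑ i, (f (k+1) i - f k i))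
        = ∑ i, (f (k+1) i - f 0 i) := sumgap_add
    push_cast
    omega

lemma exists_min {E : Set (Fin d → ℤ)} (hmc : MinClosedD E) {u lb : Fin d → ℤ}
    (hu : u ∈ E) (hlb : ∀ y ∈ E, lb ≤ y) : ∃ m ∈ E, ∀ y ∈ E, m ≤ y := by
  have hfin : (E ∩ Set.Icc lb u).Finite := (Set.finite_Icc lb u).subset (by
    intro x hx; exact hx.2)
  have hne : u ∈ E ∩ Set.Icc lb u := ⟨hu, hlb u hu, le_refl u⟩
  have hne' : hfin.toFinset.Nonempty := ⟨u, hfin.mem_toFinset.2 hne⟩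
  refine ⟨hfin.toFinset.inf' hne' id, ?_, ?_⟩
  · exact Finset.inf'_mem E (fun x hx y hy => hmc x hx y hy) _ hne' id
      (fun i hi => (hfin.mem_toFinset.1 hi).1)
  · intro y hy
    have hyu : y ⊓ u ∈ E ∩ Set.Icc lb u :=
      ⟨hmc y hy u hu, le_inf (hlb y hy) (hlb u hu), inf_le_right⟩
    calc hfin.toFinset.inf' hne' id ≤ y ⊓ u :=
          Finset.inf'_le id (hfin.mem_toFinset.2 hyu)
      _ ≤ y := inf_le_left

lemma exists_cover {E : Set (Fin d → ℤ)} {x y : Fin d → ℤ}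
    (hy : y ∈ E) (hxy : x < y) :
    ∃ z ∈ E, x < z ∧ z ≤ y ∧ ∀ w ∈ E, ¬ (x < w ∧ w < z) := by
  classical
  have hfin : (E ∩ {z | x < z ∧ z ≤ y}).Finite := (Set.finite_Icc x y).subset (by
    intro z hz; exact ⟨hz.2.1.le, hz.2.2⟩)
  have hne' : hfin.toFinset.Nonempty := ⟨y, hfin.mem_toFinset.2 ⟨hy, hxy, le_refl y⟩⟩
  obtain ⟨z, hz, hzmin⟩ := hfin.toFinset.exists_minimal hne'
  rw [hfin.mem_toFinset] at hz
  refine ⟨z, hz.1, hz.2.1, hz.2.2, ?_⟩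
  rintro w hw ⟨hxw, hwz⟩
  exact absurd (hzmin (hfin.mem_toFinset.2 ⟨hw, hxw, le_trans hwz.le hz.2.2⟩) hwz.le) (not_le_of_gt hwz)

def consChain (x : Fin d → ℤ) (f : ℕ → Fin d → ℤ) : ℕ → Fin d → ℤ :=
  fun t => match t with | 0 => x | k+1 => f k

lemma satchain_shift {E : Set (Fin d → ℤ)} {n : ℕ} {f : ℕ → Fin d → ℤ}
    (hf : IsSatChainD E (n + 1) f) : IsSatChainD E n (fun t => f (t + 1)) :=
  ⟨fun i hi => hf.1 (i+1) (by omega), fun i hi => hf.2.1 (i+1) (by omega),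
   fun i hi => hf.2.2 (i+1) (by omega)⟩

lemma satchain_cons {E : Set (Fin d → ℤ)} {x z : Fin d → ℤ} (hx : x ∈ E) (hxz : x < z)
    (hcov : ∀ w ∈ E, ¬ (x < w ∧ w < z)) {n : ℕ} {f : ℕ → Fin d → ℤ}
    (hf : IsSatChainD E n f) (h0 : f 0 = z) :
    IsSatChainD E (n + 1) (consChain x f) := by
  refine ⟨?_, ?_, ?_⟩
  · rintro (_ | i) hi
    · exact hx
    · exact hf.1 i (by omega)
  · rintro (_ | i) hi
    · show x < f 0
      rw [h0]; exact hxz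
    · exact hf.2.1 i (by omega)
  · rintro (_ | i) hi w hw
    · show ¬ (x < w ∧ w < f 0)
      rw [h0]; exact hcov w hw
    · exact hf.2.2 i (by omega) w hw

lemma satchain_concat {E : Set (Fin d → ℤ)} {n m : ℕ} {f g : ℕ → Fin d → ℤ}
    (hf : IsSatChainD E n f) (hg : IsSatChainD E m g) (hfg : f n = g 0) :
    IsSatChainD E (n + m) (fun t => if t ≤ n then f t else g (t - n)) := by
  refine ⟨?_, ?_, ?_⟩
  · intro i hi
    show (if i ≤ n then f i else g (i - n)) ∈ E
    by_cases h : i ≤ n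
    · rw [if_pos h]; exact hf.1 i h
    · rw [if_neg h]; exact hg.1 (i - n) (by omega)
  · intro i hi
    show (if i ≤ n then f i else g (i - n)) < (if i + 1 ≤ n then f (i+1) else g (i+1-n))
    rcases lt_trichotomy i n with h | h | h
    · rw [if_pos h.le, if_pos (show i + 1 ≤ n by omega)]
      exact hf.2.1 i h
    · subst h
      rw [if_pos le_rfl, if_neg (by omega), hfg, (show i + 1 - i = 1 by omega)]
      exact hg.2.1 0 (by omega)
    · rw [if_neg (by omega), if_neg (by omega), (show i + 1 - n = (i - n) + 1 by omega)]
      exact hg.2.1 (i-n) (by omega)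
  · intro i hi w hw
    show ¬ ((if i ≤ n then f i else g (i - n)) < w ∧
        w < (if i + 1 ≤ n then f (i+1) else g (i+1-n)))
    rcases lt_trichotomy i n with h | h | h
    · rw [if_pos h.le, if_pos (show i + 1 ≤ n by omega)]
      exact hf.2.2 i h w hw
    · subst h
      rw [if_pos le_rfl, if_neg (by omega), hfg, (show i + 1 - i = 1 by omega)]
      exact hg.2.2 0 (by omega) w hw
    · rw [if_neg (by omega), if_neg (by omega), (show i + 1 - n = (i - n) + 1 by omega)]
      exact hg.2.2 (i-n) (by omega) w hw

lemma exists_satchain {E : Set (Fin d → ℤ)} :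
    ∀ N : ℕ, ∀ x y : Fin d → ℤ, x ∈ E → y ∈ E → x ≤ y →
      (∑ i, (y i - x i)).toNat ≤ N →
      ∃ n f, IsSatChainD E n f ∧ f 0 = x ∧ f n = y := by
  intro N
  induction N with
  | zero =>
    intro x y hx hy hxy hm
    have h0 : ∑ i, (y i - x i) = 0 := le_antisymm (by omega) (sumgap_nonneg hxy)
    have hxy' : x = y := by
      funext i
      have h1 : y i - x i = 0 :=
        (Finset.sum_eq_zero_iff_of_nonneg
          (fun j (_ : j ∈ Finset.univ) => sub_nonneg.2 (hxy j))).1 h0 i (Finset.mem_univ i)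
      omega
    subst hxy'
    exact ⟨0, fun _ => x, ⟨fun i hi => by simpa using hx, by omega, by omega⟩, rfl, rfl⟩
  | succ N ih =>
    intro x y hx hy hxy hm
    rcases eq_or_lt_of_le hxy with h | h
    · subst h
      exact ⟨0, fun _ => x, ⟨fun i hi => by simpa using hx, by omega, by omega⟩, rfl, rfl⟩
    · obtain ⟨z, hz, hxz, hzy, hcov⟩ := exists_cover hy h
      have hmz : (∑ i, (y i - z i)).toNat ≤ N := by
        have h1 : (∑ i, (z i - x i)) + (∑ i, (y i - z i)) = ∑ i, (y i - x i) :=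
          sumgap_add
        have h2 : 0 < ∑ i, (z i - x i) := sumgap_pos hxz
        have h3 : 0 ≤ ∑ i, (y i - z i) := sumgap_nonneg hzy
        omega
      obtain ⟨n, f, hchain, hf0, hfn⟩ := ih z y hz hy hzy hmz
      exact ⟨n + 1, _, satchain_cons hx hxz hcov hchain hf0, rfl, hfn⟩

lemma diamond {E : Set (Fin d → ℤ)} (hmc : MinClosedD E) (hG3 : G3PD E)
    {a α β γ : Fin d → ℤ} (hαE : α ∈ E) (hβE : β ∈ E) (hγE : γ ∈ E)
    (haα : a < α) (haβ : a < β)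
    (hcovβ : ∀ w ∈ E, ¬ (a < w ∧ w < β))
    (hαγ : α ≤ γ) (hβγ : β ≤ γ)
    (hγmin : ∀ v ∈ E, α ≤ v → β ≤ v → γ ≤ v) :
    ∀ δ ∈ E, ¬ (α < δ ∧ δ < γ) := by
  rintro δ hδE ⟨hαδ, hδγ⟩
  have haδ : a ≤ δ := le_trans haα.le hαδ.le
  -- δ ⊓ β = a
  have hdb : δ ⊓ β = a := by
    by_contra hne'
    have hmem : δ ⊓ β ∈ E := hmc δ hδE β hβE
    have h1 : a ≤ δ ⊓ β := le_inf haδ haβ.le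
    have h2 : δ ⊓ β ≤ β := inf_le_right
    rcases eq_or_lt_of_le h2 with h3 | h3
    · have hβδ : β ≤ δ := inf_eq_right.1 h3
      exact lt_irrefl δ (lt_of_lt_of_le hδγ (hγmin δ hδE hαδ.le hβδ))
    · exact hcovβ _ hmem ⟨lt_of_le_of_ne h1 (Ne.symm hne'), h3⟩
  obtain ⟨i0, hi0⟩ : ∃ i, a i < β i := exists_lt_coord haβ
  have hδi0 : δ i0 = a i0 := by
    have h' : min (δ i0) (β i0) = a i0 := congrFun hdb i0
    have h1 := haδ i0
    rcases le_total (δ i0) (β i0) with hc | hc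
    · rw [min_eq_left hc] at h'; omega
    · rw [min_eq_right hc] at h'; omega
  have hαi0 : α i0 = a i0 := by
    have h1 := hαδ.le i0
    have h2 := haα.le i0
    rw [hδi0] at h1
    exact le_antisymm h1 h2
  obtain ⟨ε, hεE, hεi0, hεj⟩ :=
    hG3 α hαE δ hδE (ne_of_lt hαδ) i0 (by rw [hαi0, hδi0])
  have hαε : α ≤ ε := by
    intro j
    by_cases hj : j = i0
    · subst hj; exact hεi0.le
    · have h1 := (hεj j hj).1
      rwa [min_eq_left (hαδ.le j)] at h1
  have hζE : ε ⊓ γ ∈ E := hmc ε hεE γ hγE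
  have hζα : α ≤ ε ⊓ γ := le_inf hαε hαγ
  have hζi0 : a i0 < (ε ⊓ γ) i0 := by
    have h5 : a i0 < γ i0 := lt_of_lt_of_le hi0 (hβγ i0)
    rw [hαi0] at hεi0
    exact lt_min hεi0 h5
  have hζβ : β ≤ ε ⊓ γ := by
    by_contra hc
    have hmem : (ε ⊓ γ) ⊓ β ∈ E := hmc _ hζE β hβE
    have h1 : a ≤ (ε ⊓ γ) ⊓ β := le_inf (le_trans haα.le hζα) haβ.le
    have h2 : (ε ⊓ γ) ⊓ β ≤ β := inf_le_right
    have hne2 : (ε ⊓ γ) ⊓ β ≠ a := by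
      intro h
      have h' : min ((ε ⊓ γ) i0) (β i0) = a i0 := congrFun h i0
      have := lt_min hζi0 hi0
      omega
    have hne3 : (ε ⊓ γ) ⊓ β ≠ β := fun h => hc (inf_eq_right.1 h)
    exact hcovβ _ hmem ⟨lt_of_le_of_ne h1 (Ne.symm hne2), lt_of_le_of_ne h2 hne3⟩
  have hγζ : γ ≤ ε ⊓ γ := hγmin _ hζE hζα hζβ
  have hγε : γ ≤ ε := le_trans hγζ inf_le_left
  obtain ⟨j, hj⟩ : ∃ j, α j < δ j := exists_lt_coord hαδ
  have hjne : j ≠ i0 := by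
    intro h; subst h; omega
  have hεj' : ε j = min (α j) (δ j) := (hεj j hjne).2 (by omega)
  rw [min_eq_left (hαδ.le j)] at hεj'
  have h7 := hγε j
  have h8 := hδγ.le j
  rw [hεj'] at h7
  exact absurd (le_trans h8 h7) (not_le.2 hj)

lemma satchain_unique_len {E : Set (Fin d → ℤ)} (hmc : MinClosedD E) (hG3 : G3PD E) :
    ∀ N : ℕ, ∀ a b : Fin d → ℤ, (∑ i, (b i - a i)).toNat ≤ N →
      ∀ n m f g, IsSatChainD E n f → f 0 = a → f n = b →
        IsSatChainD E m g → g 0 = a → g m = b → n = m := by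
  intro N
  induction N with
  | zero =>
    intro a b hN n m f g hf hf0 hfn hg hg0 hgm
    -- a = b forced if any chain has positive length; in fact n = m = 0
    rcases Nat.eq_zero_or_pos n with hn | hn
    · rcases Nat.eq_zero_or_pos m with hm | hm
      · omega
      · exfalso
        have hab : a = b := by rw [← hf0, ← hfn, hn]
        have h1 : a < g 1 := by rw [← hg0]; exact hg.2.1 0 hm
        have h2 : g 1 ≤ b := by rw [← hgm]; exact chain_mono hg 1 m hm le_rfl
        have h3 : a < b := lt_of_lt_of_le h1 h2
        have := sumgap_pos h3
        omega
    · exfalso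
      have h1 : a < f 1 := by rw [← hf0]; exact hf.2.1 0 hn
      have h2 : f 1 ≤ b := by rw [← hfn]; exact chain_mono hf 1 n hn le_rfl
      have h3 : a < b := lt_of_lt_of_le h1 h2
      have := sumgap_pos h3
      omega
  | succ N ih =>
    intro a b hN n m f g hf hf0 hfn hg hg0 hgm
    rcases Nat.eq_zero_or_pos n with hn | hn
    · rcases Nat.eq_zero_or_pos m with hm | hm
      · omega
      · exfalso
        have hab : a = b := by rw [← hf0, ← hfn, hn]
        have h1 : a < g 1 := by rw [← hg0]; exact hg.2.1 0 hm
        have h2 : g 1 ≤ b := by rw [← hgm]; exact chain_mono hg 1 m hm le_rfl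
        have h3 : a < a := by rw [hab] at h1 ⊢; exact lt_of_lt_of_le h1 h2
        exact lt_irrefl a h3
    · rcases Nat.eq_zero_or_pos m with hm | hm
      · exfalso
        have hab : a = b := by rw [← hg0, ← hgm, hm]
        have h1 : a < f 1 := by rw [← hf0]; exact hf.2.1 0 hn
        have h2 : f 1 ≤ b := by rw [← hfn]; exact chain_mono hf 1 n hn le_rfl
        have h3 : a < a := by rw [hab] at h1 ⊢; exact lt_of_lt_of_le h1 h2
        exact lt_irrefl a h3
      · -- both chains nonempty
        set α := f 1 with hα
        set β := g 1 with hβ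
        have hαE : α ∈ E := hf.1 1 hn
        have hβE : β ∈ E := hg.1 1 hm
        have haα : a < α := by rw [← hf0]; exact hf.2.1 0 hn
        have haβ : a < β := by rw [← hg0]; exact hg.2.1 0 hm
        have hcovα : ∀ w ∈ E, ¬ (a < w ∧ w < α) := by
          intro w hw; rw [← hf0]; exact hf.2.2 0 hn w hw
        have hcovβ : ∀ w ∈ E, ¬ (a < w ∧ w < β) := by
          intro w hw; rw [← hg0]; exact hg.2.2 0 hm w hw
        have hαb : α ≤ b := by rw [← hfn]; exact chain_mono hf 1 n hn le_rfl
        have hβb : β ≤ b := by rw [← hgm]; exact chain_mono hg 1 m hm le_rfl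
        have hbE : b ∈ E := by rw [← hfn]; exact hf.1 n le_rfl
        -- shifted chains
        have hn1 : n - 1 + 1 = n := by omega
        have hm1 : m - 1 + 1 = m := by omega
        have hf' : IsSatChainD E (n-1) (fun t => f (t+1)) := by
          apply satchain_shift; rwa [hn1]
        have hg' : IsSatChainD E (m-1) (fun t => g (t+1)) := by
          apply satchain_shift; rwa [hm1]
        have hf'0 : (fun t => f (t+1)) 0 = α := rfl
        have hg'0 : (fun t => g (t+1)) 0 = β := rfl
        have hf'n : (fun t => f (t+1)) (n-1) = b := by
          show f (n-1+1) = b; rw [hn1, hfn]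
        have hg'm : (fun t => g (t+1)) (m-1) = b := by
          show g (m-1+1) = b; rw [hm1, hgm]
        have hmeasα : (∑ i, (b i - α i)).toNat ≤ N := by
          have h1 : (∑ i, (α i - a i)) + (∑ i, (b i - α i)) = ∑ i, (b i - a i) :=
            sumgap_add
          have h2 : 0 < ∑ i, (α i - a i) := sumgap_pos haα
          have h3 : 0 ≤ ∑ i, (b i - α i) := sumgap_nonneg hαb
          omega
        have hmeasβ : (∑ i, (b i - β i)).toNat ≤ N := by
          have h1 : (∑ i, (β i - a i)) + (∑ i, (b i - β i)) = ∑ i, (b i - a i) :=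
            sumgap_add
          have h2 : 0 < ∑ i, (β i - a i) := sumgap_pos haβ
          have h3 : 0 ≤ ∑ i, (b i - β i) := sumgap_nonneg hβb
          omega
        by_cases hαβ : α = β
        · -- same first step
          have := ih α b hmeasα (n-1) (m-1) _ _ hf' hf'0 hf'n hg'
            (by rw [hαβ]) hg'm
          omega
        · -- diamond
          have hmcU : MinClosedD {v | v ∈ E ∧ α ≤ v ∧ β ≤ v} := by
            intro u hu v hv
            exact ⟨hmc u hu.1 v hv.1, le_inf hu.2.1 hv.2.1, le_inf hu.2.2 hv.2.2⟩
          obtain ⟨γ, hγU, hγmin'⟩ := exists_min hmcU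
            (u := b) (lb := α) ⟨hbE, hαb, hβb⟩ (fun y hy => hy.2.1)
          have hγE : γ ∈ E := hγU.1
          have hγmin : ∀ v ∈ E, α ≤ v → β ≤ v → γ ≤ v := fun v hv h1 h2 =>
            hγmin' v ⟨hv, h1, h2⟩
          have hαγ : α < γ := by
            rcases eq_or_lt_of_le hγU.2.1 with h | h
            · exfalso
              have hβα : β < α := lt_of_le_of_ne (h ▸ hγU.2.2) (fun h' => hαβ h'.symm)
              exact hcovα β hβE ⟨haβ, hβα⟩
            · exact h
          have hβγ : β < γ := by
            rcases eq_or_lt_of_le hγU.2.2 with h | h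
            · exfalso
              have hαβ' : α < β := lt_of_le_of_ne (h ▸ hγU.2.1) hαβ
              exact hcovβ α hαE ⟨haα, hαβ'⟩
            · exact h
          have hdα : ∀ w ∈ E, ¬ (α < w ∧ w < γ) :=
            diamond hmc hG3 hαE hβE hγE haα haβ hcovβ hγU.2.1 hγU.2.2 hγmin
          have hdβ : ∀ w ∈ E, ¬ (β < w ∧ w < γ) :=
            diamond hmc hG3 hβE hαE hγE haβ haα hcovα hγU.2.2 hγU.2.1
              (fun v hv h1 h2 => hγmin v hv h2 h1)
          have hγb : γ ≤ b := hγmin b hbE hαb hβb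
          obtain ⟨ℓ, h, hh, hh0, hhℓ⟩ :=
            exists_satchain (E := E) ((∑ i, (b i - γ i)).toNat) γ b hγE hbE hγb le_rfl
          have hc1 : IsSatChainD E (ℓ+1) (consChain α h) :=
            satchain_cons hαE hαγ hdα hh hh0
          have hc2 : IsSatChainD E (ℓ+1) (consChain β h) :=
            satchain_cons hβE hβγ hdβ hh hh0
          have e1 : n - 1 = ℓ + 1 :=
            ih α b hmeasα (n-1) (ℓ+1) _ _ hf' hf'0 hf'n hc1 rfl hhℓ
          have e2 : m - 1 = ℓ + 1 :=
            ih β b hmeasβ (m-1) (ℓ+1) _ _ hg' hg'0 hg'm hc2 rfl hhℓ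
          omega

lemma chainDistD_eq_of_chain {E : Set (Fin d → ℤ)} (hmc : MinClosedD E) (hG3 : G3PD E)
    {a b : Fin d → ℤ} {n : ℕ} {f : ℕ → Fin d → ℤ}
    (hf : IsSatChainD E n f) (hf0 : f 0 = a) (hfn : f n = b) :
    chainDistD E a b = n := by
  have hset : {n' : ℕ | ∃ g : ℕ → (Fin d → ℤ), IsSatChainD E n' g ∧ g 0 = a ∧ g n' = b}
      = {n} := by
    ext m
    simp only [Set.mem_setOf_eq, Set.mem_singleton_iff]
    constructor
    · rintro ⟨g, hg, hg0, hgm⟩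
      exact satchain_unique_len hmc hG3 ((∑ i, (b i - a i)).toNat) a b le_rfl m n g f
        hg hg0 hgm hf hf0 hfn
    · rintro rfl
      exact ⟨f, hf, hf0, hfn⟩
  rw [chainDistD, hset, csSup_singleton]

lemma unit_cover {u w : Fin d → ℤ} {j : Fin d} (h1 : u < w)
    (h2 : w < u + Pi.single j 1) : False := by
  have hkey : ∀ k, k ≠ j → w k = u k := by
    intro k hk
    have ha : u k ≤ w k := h1.le k
    have hb : w k ≤ u k + (Pi.single j 1 : Fin d → ℤ) k := h2.le k
    rw [Pi.single_apply, if_neg hk] at hb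
    omega
  have hj1 : u j ≤ w j := h1.le j
  have hj2 : w j ≤ u j + 1 := by
    have := h2.le j
    rwa [Pi.add_apply, Pi.single_apply, if_pos rfl] at this
  rcases eq_or_lt_of_le hj1 with h | h
  · apply h1.ne
    funext k
    by_cases hk : k = j
    · subst hk; exact h
    · exact (hkey k hk).symm
  · apply h2.ne
    funext k
    by_cases hk : k = j
    · subst hk
      rw [Pi.add_apply, Pi.single_apply, if_pos rfl]
      omega
    · rw [Pi.add_apply, Pi.single_apply, if_neg hk, add_zero]
      exact hkey k hk

lemma lt_add_single (u : Fin d → ℤ) (j : Fin d) : u < u + Pi.single j 1 := by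
  refine lt_iff_le_and_ne.2 ⟨?_, ?_⟩
  · intro k
    rw [Pi.add_apply, Pi.single_apply]
    by_cases hk : k = j <;> simp [hk]
  · intro h
    have := congrFun h j
    rw [Pi.add_apply, Pi.single_apply, if_pos rfl] at this
    omega



lemma exists_unit_chain : ∀ (N : ℕ) (u v : Fin d → ℤ), u ≤ v →
    (∑ i, (v i - u i)) = (N : ℤ) →
    ∃ f : ℕ → Fin d → ℤ, f 0 = u ∧ f N = v ∧
      (∀ t, t < N → u ≤ f t ∧ ∃ j, f (t+1) = f t + Pi.single j 1) := by
  intro N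
  induction N with
  | zero =>
    intro u v huv hsum
    have : u = v := by
      funext i
      have h1 : v i - u i = 0 :=
        (Finset.sum_eq_zero_iff_of_nonneg
          (fun j (_ : j ∈ Finset.univ) => sub_nonneg.2 (huv j))).1 hsum i (Finset.mem_univ i)
      omega
    exact ⟨fun _ => u, rfl, by rw [this], fun t ht => absurd ht (by omega)⟩
  | succ N ih =>
    intro u v huv hsum
    have hne : u ≠ v := by
      intro h
      subst h
      simp at hsum
      omega
    obtain ⟨j, hj⟩ := exists_lt_coord (lt_of_le_of_ne huv hne)
    set u' := u + Pi.single j 1 with hu'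
    have hu'v : u' ≤ v := by
      intro k
      rw [hu', Pi.add_apply, Pi.single_apply]
      by_cases hk : k = j
      · subst hk; simp; omega
      · simp [hk]; exact huv k
    have hsum' : (∑ i, (v i - u' i)) = (N : ℤ) := by
      have : ∀ i, v i - u' i = (v i - u i) - (Pi.single j 1 : Fin d → ℤ) i := by
        intro i; rw [hu', Pi.add_apply]; ring
      rw [Finset.sum_congr rfl (fun i _ => this i), Finset.sum_sub_distrib]
      rw [Finset.sum_pi_single']
      simp only [Finset.mem_univ, if_pos]
      push_cast at hsum ⊢
      omega
    obtain ⟨g, hg0, hgN, hgstep⟩ := ih u' v hu'v hsum'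
    refine ⟨consChain u g, rfl, hgN, ?_⟩
    rintro (_ | t) ht
    · refine ⟨le_refl u, j, ?_⟩
      show g 0 = u + Pi.single j 1
      rw [hg0]
    · obtain ⟨h1, h2⟩ := hgstep t (by omega)
      refine ⟨?_, h2⟩
      show u ≤ g t
      exact le_trans (le_of_lt (lt_add_single u j)) h1

lemma unit_chain_sat {T : Set (Fin d → ℤ)} {u v : Fin d → ℤ} {N : ℕ}
    {f : ℕ → Fin d → ℤ} (hf0 : f 0 = u) (hfN : f N = v)
    (hstep : ∀ t, t < N → u ≤ f t ∧ ∃ j, f (t+1) = f t + Pi.single j 1)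
    (hmem : ∀ t ≤ N, f t ∈ T) : IsSatChainD T N f := by
  refine ⟨hmem, ?_, ?_⟩
  · intro t ht
    obtain ⟨-, j, hj⟩ := hstep t ht
    rw [hj]
    exact lt_add_single _ j
  · intro t ht w hw hcontra
    obtain ⟨-, j, hj⟩ := hstep t ht
    rw [hj] at hcontra
    exact unit_cover hcontra.1 hcontra.2

lemma satchain_steps_one {T : Set (Fin d → ℤ)} {b₀ : Fin d → ℤ}
    (hT : ∀ y, y ∈ T → b₀ ≤ y) (hT' : ∀ y, b₀ ≤ y → y ∈ T)
    {n : ℕ} {f : ℕ → Fin d → ℤ} (hf : IsSatChainD T n f) :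
    ∀ t < n, (∑ i, (f (t+1) i - f t i)) = 1 := by
  intro t ht
  have hlt := hf.2.1 t ht
  have hpos := sumgap_pos hlt
  by_contra hne
  have h2 : 2 ≤ ∑ i, (f (t+1) i - f t i) := by omega
  obtain ⟨j, hj⟩ := exists_lt_coord hlt
  set w := f t + Pi.single j 1 with hw
  have hwle : w ≤ f (t+1) := by
    intro k
    rw [hw, Pi.add_apply, Pi.single_apply]
    by_cases hk : k = j
    · subst hk; simp; omega
    · simp [hk]; exact hlt.le k
  have hwne : w ≠ f (t+1) := by
    intro h
    rw [← h, hw] at h2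
    simp only [Pi.add_apply] at h2
    have : ∀ i, f t i + (Pi.single j 1 : Fin d → ℤ) i - f t i
        = (Pi.single j 1 : Fin d → ℤ) i := fun i => by ring
    rw [Finset.sum_congr rfl (fun i _ => this i), Finset.sum_pi_single'] at h2
    simp at h2
  have hwT : w ∈ T := hT' w (le_trans (hT (f t) (hf.1 t (by omega))) (lt_add_single _ j).le)
  exact hf.2.2 t ht w hwT ⟨lt_add_single _ j, lt_of_le_of_ne hwle hwne⟩

lemma satchain_telescope {n : ℕ} {f : ℕ → Fin d → ℤ}
    (hone : ∀ t < n, (∑ i, (f (t+1) i - f t i)) = 1) :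
    ∀ t ≤ n, (∑ i, (f t i - f 0 i)) = t := by
  intro t
  induction t with
  | zero => simp
  | succ k ih =>
    intro ht
    have h1 := ih (by omega)
    have h2 := hone k (by omega)
    have h3 : (∑ i, (f k i - f 0 i)) + (∑ i, (f (k+1) i - f k i))
        = ∑ i, (f (k+1) i - f 0 i) := sumgap_add
    push_cast
    omega

lemma chainDistD_upset {T : Set (Fin d → ℤ)} {b₀ : Fin d → ℤ}
    (hT : ∀ y, y ∈ T → b₀ ≤ y) (hT' : ∀ y, b₀ ≤ y → y ∈ T)
    {α : Fin d → ℤ} (hα : b₀ ≤ α) :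
    chainDistD T b₀ α = (∑ i, (α i - b₀ i)).toNat := by
  set N := (∑ i, (α i - b₀ i)).toNat with hN
  have hNsum : (∑ i, (α i - b₀ i)) = (N : ℤ) := by
    have := sumgap_nonneg hα
    omega
  obtain ⟨f, hf0, hfN, hstep⟩ := exists_unit_chain N b₀ α hα hNsum
  have hmono : ∀ t ≤ N, b₀ ≤ f t := by
    intro t ht
    rcases Nat.eq_or_lt_of_le ht with h | h
    · rw [h, hfN]; exact hα
    · exact (hstep t h).1
  have hchain : IsSatChainD T N f :=
    unit_chain_sat hf0 hfN hstep (fun t ht => hT' _ (hmono t ht))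
  have hset : {n' : ℕ | ∃ g : ℕ → (Fin d → ℤ), IsSatChainD T n' g ∧ g 0 = b₀ ∧ g n' = α}
      = {N} := by
    ext m
    simp only [Set.mem_setOf_eq, Set.mem_singleton_iff]
    constructor
    · rintro ⟨g, hg, hg0, hgm⟩
      have h1 := satchain_telescope (satchain_steps_one hT hT' hg) m le_rfl
      rw [hg0, hgm] at h1
      omega
    · rintro rfl
      exact ⟨f, hchain, hf0, hfN⟩
  rw [chainDistD, hset, csSup_singleton]

section Cond

variable {S : Set (Fin d → ℤ)}

lemma CD_minclosed (hS : IsGoodD S) :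
    MinClosedD {δ : Fin d → ℤ | ∀ y, δ ≤ y → y ∈ S} := by
  intro δ1 h1 δ2 h2 y hy
  have ha : y ⊔ δ1 ∈ S := h1 _ le_sup_right
  have hb : y ⊔ δ2 ∈ S := h2 _ le_sup_right
  have hmin := hS.2.2.2.1 _ ha _ hb
  rw [← sup_inf_left, sup_eq_left.2 hy] at hmin
  exact hmin

lemma CD_nonneg (hS : IsGoodD S) {δ : Fin d → ℤ}
    (hδ : ∀ y, δ ≤ y → y ∈ S) (i : Fin d) : 0 ≤ δ i := by
  set y : Fin d → ℤ := fun k => if k = i then δ i else δ k ⊔ 0 with hy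
  have hδy : δ ≤ y := by
    intro k
    rw [hy]
    by_cases hk : k = i
    · subst hk; simp
    · simp [hk]
  have hyS : y ∈ S := hδ y hδy
  have := hS.1 hyS i
  simpa [hy] using this

lemma cond_mem (hS : IsGoodD S) : ∀ y, condD S ≤ y → y ∈ S := by
  intro y hy
  set CD := {δ : Fin d → ℤ | ∀ y, δ ≤ y → y ∈ S} with hCD
  obtain ⟨δ0, hδ0⟩ := hS.2.2.2.2.1
  rcases isEmpty_or_nonempty (Fin d) with hd | hd
  · exact hδ0 y (fun i => hd.elim i)
  · have himg : ∀ i : Fin d, ∃ δ ∈ CD, δ i = condD S i := by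
      intro i
      have hne : ((fun δ => δ i) '' CD).Nonempty := ⟨δ0 i, δ0, hδ0, rfl⟩
      have hbdd : BddBelow ((fun δ => δ i) '' CD) := by
        refine ⟨0, ?_⟩
        rintro z ⟨δ, hδ, rfl⟩
        exact CD_nonneg hS hδ i
      have := Int.csInf_mem hne
      obtain ⟨δ, hδ, hδi⟩ := this hbdd
      exact ⟨δ, hδ, hδi⟩
    choose δf hδf hδfi using himg
    obtain ⟨i0⟩ := hd
    have hne' : (Finset.univ : Finset (Fin d)).Nonempty := ⟨i0, Finset.mem_univ i0⟩
    have hmem : Finset.univ.inf' hne' δf ∈ CD :=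
      Finset.inf'_mem CD (fun x hx y hy => CD_minclosed hS x hx y hy) _ hne' δf
        (fun i _ => hδf i)
    apply hmem
    intro k
    have h1 : (Finset.univ.inf' hne' δf) k = Finset.univ.inf' hne' (fun i => δf i k) :=
      Finset.inf'_apply hne' δf k
    have h2 : Finset.univ.inf' hne' (fun i => δf i k) ≤ δf k k :=
      Finset.inf'_le _ (Finset.mem_univ k)
    have h3 : condD S k ≤ y k := hy k
    rw [hδfi k] at h2
    rw [h1]
    exact le_trans h2 h3

lemma cond_nonneg (hS : IsGoodD S) : (0 : Fin d → ℤ) ≤ condD S := by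
  intro i
  obtain ⟨δ0, hδ0⟩ := hS.2.2.2.2.1
  refine le_csInf ⟨δ0 i, δ0, hδ0, rfl⟩ ?_
  rintro z ⟨δ, hδ, rfl⟩
  exact CD_nonneg hS hδ i

lemma minElD_upset {b₀ : Fin d → ℤ} {T : Set (Fin d → ℤ)}
    (hT : ∀ y, y ∈ T ↔ b₀ ≤ y) : minElD T = b₀ := by
  funext i
  have hmem : b₀ ∈ T := (hT b₀).2 le_rfl
  have hbdd : BddBelow ((fun a => a i) '' T) := by
    refine ⟨b₀ i, ?_⟩
    rintro z ⟨y, hy, rfl⟩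
    exact (hT y).1 hy i
  apply le_antisymm
  · exact csInf_le hbdd ⟨b₀, hmem, rfl⟩
  · refine le_csInf ⟨b₀ i, b₀, hmem, rfl⟩ ?_
    rintro z ⟨y, hy, rfl⟩
    exact (hT y).1 hy i

lemma minElD_S (hS : IsGoodD S) : minElD S = 0 := by
  funext i
  have hbdd : BddBelow ((fun a => a i) '' S) := by
    refine ⟨0, ?_⟩
    rintro z ⟨y, hy, rfl⟩
    exact hS.1 hy i
  apply le_antisymm
  · have h0 : ((0 : Fin d → ℤ) i) ∈ (fun a => a i) '' S := ⟨0, hS.2.1, rfl⟩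
    exact csInf_le hbdd h0
  · refine le_csInf ⟨(0 : Fin d → ℤ) i, (0 : Fin d → ℤ), hS.2.1, rfl⟩ ?_
    rintro z ⟨y, hy, rfl⟩
    exact hS.1 hy i

lemma CIdeal_eq (hS : IsGoodD S) : CIdealD S = {y | condD S ≤ y} := by
  ext y
  constructor
  · exact fun h => h.2
  · exact fun h => ⟨cond_mem hS y h, h⟩

lemma orth_eq : orthD d = {y | (0 : Fin d → ℤ) ≤ y} := by
  ext y
  constructor
  · exact fun h i => h i
  · exact fun h i => h i

end Cond

section Corner

variable {S : Set (Fin d → ℤ)}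

/-- `Fprev S i`: elements of `S` whose coordinates before `i` are ≥ conductor. -/
def Fprev (S : Set (Fin d → ℤ)) (i : Fin d) : Set (Fin d → ℤ) :=
  {β | β ∈ S ∧ ∀ j, j < i → condD S j ≤ β j}

def Gset (S : Set (Fin d → ℤ)) (i : Fin d) (a : ℤ) : Set (Fin d → ℤ) :=
  {β | β ∈ Fprev S i ∧ a ≤ β i}

def Vset (S : Set (Fin d → ℤ)) (i : Fin d) : Set ℤ :=
  {x | x ≤ condD S i ∧ ∃ β ∈ Fprev S i, β i = x}

def Pset (S : Set (Fin d → ℤ)) (i : Fin d) : Set ℤ :=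
  {x : ℤ | 0 ≤ x ∧ x < condD S i ∧
    ∃ β ∈ S, β i = x ∧ ∀ j, j < i → β j = condD S j}

lemma pulldown (hS : IsGoodD S) (i : Fin d) {β : Fin d → ℤ} (hβ : β ∈ Fprev S i) :
    ∃ β', β' ∈ Fprev S i ∧ β' i = β i ∧ (∀ j, j < i → β' j = condD S j) ∧ β' ≤ β := by
  set η : Fin d → ℤ := fun j => if j < i then condD S j else condD S j ⊔ β j with hη
  have hηS : η ∈ S := by
    apply cond_mem hS
    intro j
    rw [hη]
    by_cases hj : j < i
    · simp [hj]
    · simp [hj]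
  have hmem : β ⊓ η ∈ S := hS.2.2.2.1 β hβ.1 η hηS
  have hcoords : ∀ j, j < i → (β ⊓ η) j = condD S j := by
    intro j hj
    show min (β j) (η j) = condD S j
    rw [hη]
    simp only [if_pos hj]
    exact min_eq_right (hβ.2 j hj)
  refine ⟨β ⊓ η, ⟨hmem, fun j hj => le_of_eq (hcoords j hj).symm⟩, ?_, hcoords,
    inf_le_left⟩
  show min (β i) (η i) = β i
  rw [hη]
  simp only [lt_irrefl, if_neg (lt_irrefl i)]
  exact min_eq_left (le_trans le_sup_right (le_refl _))

lemma Vset_subset (hS : IsGoodD S) (i : Fin d) :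
    Vset S i ⊆ Set.Icc 0 (condD S i) := by
  rintro x ⟨hx, β, hβ, rfl⟩
  exact ⟨hS.1 hβ.1 i, hx⟩

lemma Vset_finite (hS : IsGoodD S) (i : Fin d) : (Vset S i).Finite :=
  (Set.finite_Icc _ _).subset (Vset_subset hS i)

lemma cond_mem_Fprev (hS : IsGoodD S) (i : Fin d) : condD S ∈ Fprev S i :=
  ⟨cond_mem hS _ le_rfl, fun j _ => le_rfl⟩

lemma cond_i_mem_Vset (hS : IsGoodD S) (i : Fin d) : condD S i ∈ Vset S i :=
  ⟨le_rfl, condD S, cond_mem_Fprev hS i, rfl⟩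

lemma G_minclosed (hS : IsGoodD S) (i : Fin d) (a : ℤ) : MinClosedD (Gset S i a) := by
  rintro u ⟨⟨huS, huj⟩, hui⟩ v ⟨⟨hvS, hvj⟩, hvi⟩
  refine ⟨⟨hS.2.2.2.1 u huS v hvS, fun j hj => le_min (huj j hj) (hvj j hj)⟩, ?_⟩
  exact le_min hui hvi

lemma G_mem_cond (hS : IsGoodD S) (i : Fin d) {a : ℤ} (ha : a ≤ condD S i) :
    condD S ∈ Gset S i a := ⟨cond_mem_Fprev hS i, ha⟩

lemma exists_G_min (hS : IsGoodD S) (i : Fin d) {a : ℤ} (ha : a ≤ condD S i) :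
    ∃ μ ∈ Gset S i a, ∀ y ∈ Gset S i a, μ ≤ y :=
  exists_min (G_minclosed hS i a) (G_mem_cond hS i ha)
    (lb := 0) (fun y hy => fun j => hS.1 hy.1.1 j)

lemma G_min_coords (hS : IsGoodD S) (i : Fin d) {a : ℤ} (ha : a ∈ Vset S i)
    {μ : Fin d → ℤ} (hμ : μ ∈ Gset S i a) (hmin : ∀ y ∈ Gset S i a, μ ≤ y) :
    μ i = a ∧ ∀ j, j < i → μ j = condD S j := by
  obtain ⟨hac, β, hβ, hβi⟩ := ha
  obtain ⟨β', hβ', hβ'i, hβ'j, -⟩ := pulldown hS i hβ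
  have hβ'G : β' ∈ Gset S i a := ⟨hβ', by rw [hβ'i, hβi]⟩
  constructor
  · exact le_antisymm (by have := hmin β' hβ'G i; rw [hβ'i, hβi] at this; exact this)
      hμ.2
  · intro j hj
    exact le_antisymm (by have := hmin β' hβ'G j; rwa [hβ'j j hj] at this)
      (hμ.1.2 j hj)

lemma G_cover (hS : IsGoodD S) (i : Fin d) {a a' : ℤ}
    (ha : a ∈ Vset S i) (ha' : a' ∈ Vset S i) (haa' : a < a')
    (hleast : ∀ v ∈ Vset S i, a < v → a' ≤ v)
    {μ μ' : Fin d → ℤ}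
    (hμ : μ ∈ Gset S i a) (hμmin : ∀ y ∈ Gset S i a, μ ≤ y)
    (hμ' : μ' ∈ Gset S i a') (hμ'min : ∀ y ∈ Gset S i a', μ' ≤ y) :
    μ < μ' ∧ ∀ w ∈ S, ¬ (μ < w ∧ w < μ') := by
  obtain ⟨hμi, hμj⟩ := G_min_coords hS i ha hμ hμmin
  obtain ⟨hμ'i, hμ'j⟩ := G_min_coords hS i ha' hμ' hμ'min
  have hμμ' : μ ≤ μ' := hμmin μ' ⟨hμ'.1, by rw [hμ'i]; omega⟩
  have hlt : μ < μ' := lt_iff_le_and_ne.2 ⟨hμμ', by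
    intro h; rw [← h, hμi] at hμ'i; omega⟩
  refine ⟨hlt, ?_⟩
  rintro γ hγS ⟨h1, h2⟩
  -- γ is in Fprev
  have hγF : γ ∈ Fprev S i := by
    refine ⟨hγS, fun j hj => ?_⟩
    have := h1.le j
    rw [← hμj j hj]
    exact le_trans (le_of_eq rfl) (h1.le j)
  have hγi_le : γ i ≤ a' := by
    have : γ i ≤ μ' i := h2.le i
    omega
  by_cases hcase : a' ≤ γ i
  · -- γ ∈ G a', so μ' ≤ γ, contradiction with γ < μ'
    have : μ' ≤ γ := hμ'min γ ⟨hγF, hcase⟩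
    exact lt_irrefl γ (lt_of_lt_of_le h2 this)
  · push_neg at hcase
    have hγi_ge : a ≤ γ i := by
      have h0 : μ i ≤ γ i := h1.le i
      omega
    have hγia : γ i = a := by
      rcases eq_or_lt_of_le hγi_ge with h | h
      · omega
      · exfalso
        have hγiV : γ i ∈ Vset S i := by
          refine ⟨by have := (ha'.1); omega, γ, hγF, rfl⟩
        have := hleast (γ i) hγiV h
        omega
    -- G3 applied to μ, γ at coordinate i
    obtain ⟨ε, hεS, hεi, hεj⟩ := hS.2.2.2.2.2 μ hμ.1.1 γ hγS (ne_of_lt h1) i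
      (by rw [hμi, hγia])
    have hεF : ε ∈ Fprev S i := by
      refine ⟨hεS, fun j hj => ?_⟩
      have hne : j ≠ i := ne_of_lt hj
      have h3 := (hεj j hne).1
      rw [min_eq_left (h1.le j)] at h3
      rw [← hμj j hj]
      exact h3
    have hεi' : a' ≤ ε i := by
      by_contra hc
      push_neg at hc
      have hεiV : ε i ∈ Vset S i := by
        refine ⟨by have := ha'.1; omega, ε, hεF, rfl⟩
      have := hleast (ε i) hεiV (by rw [hμi] at hεi; omega)
      omega
    have hεG : ε ∈ Gset S i a' := ⟨hεF, hεi'⟩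
    have hμ'ε : μ' ≤ ε := hμ'min ε hεG
    obtain ⟨j, hj⟩ := exists_lt_coord h1
    have hjne : j ≠ i := by
      intro h; subst h; rw [hμi, hγia] at hj; omega
    have h4 : ε j = min (μ j) (γ j) := (hεj j hjne).2 (by omega)
    rw [min_eq_left (h1.le j)] at h4
    have h5 : μ' j ≤ ε j := hμ'ε j
    have h6 : γ j ≤ μ' j := h2.le j
    omega

end Corner

section Segment

variable {S : Set (Fin d → ℤ)}

lemma Vset_eq (hS : IsGoodD S) (i : Fin d) :
    Vset S i = insert (condD S i) (Pset S i) := by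
  ext x
  constructor
  · rintro ⟨hx, β, hβ, rfl⟩
    rcases eq_or_lt_of_le hx with h | h
    · exact Or.inl h
    · right
      obtain ⟨β', hβ', hβ'i, hβ'j, -⟩ := pulldown hS i hβ
      exact ⟨hS.1 hβ.1 i, h, β', hβ'.1, hβ'i.trans rfl, hβ'j⟩
  · rintro (rfl | ⟨hx0, hxc, β, hβS, hβi, hβj⟩)
    · exact cond_i_mem_Vset hS i
    · exact ⟨hxc.le, β, ⟨hβS, fun j hj => le_of_eq (hβj j hj).symm⟩, hβi⟩

lemma Pset_finite (hS : IsGoodD S) (i : Fin d) : (Pset S i).Finite := by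
  apply (Vset_finite hS i).subset
  rw [Vset_eq hS i]
  exact Set.subset_insert _ _

lemma segment_chain (hS : IsGoodD S) (i : Fin d) :
    ∀ k : ℕ, ∀ a : ℤ, a ∈ Vset S i → ({v ∈ Vset S i | a < v}).ncard = k →
    ∀ μ, μ ∈ Gset S i a → (∀ y ∈ Gset S i a, μ ≤ y) →
    ∀ μc, μc ∈ Gset S i (condD S i) → (∀ y ∈ Gset S i (condD S i), μc ≤ y) →
    ∃ f, IsSatChainD S k f ∧ f 0 = μ ∧ f k = μc := by
  intro k
  induction k with
  | zero =>
    intro a ha hcard μ hμ hμmin μc hμc hμcmin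
    have hfin : {v ∈ Vset S i | a < v}.Finite :=
      (Vset_finite hS i).subset (fun v hv => hv.1)
    have hac : a = condD S i := by
      rcases eq_or_lt_of_le ha.1 with h | h
      · exact h
      · exfalso
        have hmem : condD S i ∈ {v ∈ Vset S i | a < v} := ⟨cond_i_mem_Vset hS i, h⟩
        have := Set.ncard_pos hfin |>.2 ⟨_, hmem⟩
        omega
    subst hac
    have hμμc : μ = μc := le_antisymm (hμmin μc hμc) (hμcmin μ hμ)
    exact ⟨fun _ => μ, ⟨fun t _ => hμ.1.1, by omega, by omega⟩, rfl, by rw [hμμc]⟩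
  | succ k ih =>
    intro a ha hcard μ hμ hμmin μc hμc hμcmin
    have hfin : {v ∈ Vset S i | a < v}.Finite :=
      (Vset_finite hS i).subset (fun v hv => hv.1)
    have hnon : {v ∈ Vset S i | a < v}.Nonempty := by
      apply Set.nonempty_of_ncard_ne_zero
      omega
    have hnonF : hfin.toFinset.Nonempty := by
      rwa [Set.Finite.toFinset_nonempty]
    set a' := hfin.toFinset.min' hnonF with ha'def
    have ha'mem : a' ∈ {v ∈ Vset S i | a < v} :=
      hfin.mem_toFinset.1 (hfin.toFinset.min'_mem hnonF)
    have hleast : ∀ v ∈ Vset S i, a < v → a' ≤ v := fun v hv hav =>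
      hfin.toFinset.min'_le v (hfin.mem_toFinset.2 ⟨hv, hav⟩)
    obtain ⟨ha'V, haa'⟩ := ha'mem
    obtain ⟨μ', hμ', hμ'min⟩ := exists_G_min hS i ha'V.1
    obtain ⟨hlt, hcov⟩ := G_cover hS i ha ha'V haa' hleast hμ hμmin hμ' hμ'min
    -- card of the next set
    have hsetid : {v ∈ Vset S i | a < v} = insert a' {v ∈ Vset S i | a' < v} := by
      ext v
      constructor
      · rintro ⟨hv, hav⟩
        rcases eq_or_lt_of_le (hleast v hv hav) with h | h
        · exact Or.inl h.symm
        · exact Or.inr ⟨hv, h⟩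
      · rintro (rfl | ⟨hv, hav⟩)
        · exact ⟨ha'V, haa'⟩
        · exact ⟨hv, lt_trans haa' hav⟩
    have hfin' : {v ∈ Vset S i | a' < v}.Finite :=
      (Vset_finite hS i).subset (fun v hv => hv.1)
    have hcard' : {v ∈ Vset S i | a' < v}.ncard = k := by
      have hnm : a' ∉ {v ∈ Vset S i | a' < v} := fun h => lt_irrefl a' h.2
      rw [hsetid, Set.ncard_insert_of_notMem hnm hfin'] at hcard
      omega
    obtain ⟨g, hg, hg0, hgk⟩ := ih a' ha'V hcard' μ' hμ' hμ'min μc hμc hμcmin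
    exact ⟨consChain μ g, satchain_cons hμ.1.1 hlt hcov hg hg0, rfl, hgk⟩

def Wset (S : Set (Fin d → ℤ)) (m : ℕ) : Set (Fin d → ℤ) :=
  {β | β ∈ S ∧ ∀ j : Fin d, (j : ℕ) < m → condD S j ≤ β j}

lemma W_minclosed (hS : IsGoodD S) (m : ℕ) : MinClosedD (Wset S m) := by
  rintro u ⟨huS, huj⟩ v ⟨hvS, hvj⟩
  exact ⟨hS.2.2.2.1 u huS v hvS, fun j hj => le_min (huj j hj) (hvj j hj)⟩

lemma cond_mem_W (hS : IsGoodD S) (m : ℕ) : condD S ∈ Wset S m :=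
  ⟨cond_mem hS _ le_rfl, fun j _ => le_rfl⟩

lemma exists_W_min (hS : IsGoodD S) (m : ℕ) :
    ∃ μ ∈ Wset S m, ∀ y ∈ Wset S m, μ ≤ y :=
  exists_min (W_minclosed hS m) (cond_mem_W hS m)
    (lb := 0) (fun y hy => fun j => hS.1 hy.1 j)

lemma corner_chain_aux (hS : IsGoodD S) :
    ∀ m : ℕ, m ≤ d → ∀ μ, μ ∈ Wset S m → (∀ y ∈ Wset S m, μ ≤ y) →
    ∃ f, IsSatChainD S (∑ j ∈ Finset.univ.filter (fun j : Fin d => (j : ℕ) < m),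
        (Pset S j).ncard) f ∧
      f 0 = 0 ∧
      f (∑ j ∈ Finset.univ.filter (fun j : Fin d => (j : ℕ) < m), (Pset S j).ncard) = μ := by
  intro m
  induction m with
  | zero =>
    intro _ μ hμ hμmin
    have hμ0 : μ = 0 :=
      le_antisymm (hμmin 0 ⟨hS.2.1, fun j hj => absurd hj (by omega)⟩)
        (fun j => hS.1 hμ.1 j)
    have hempty : Finset.univ.filter (fun j : Fin d => (j : ℕ) < 0) = ∅ := by
      apply Finset.filter_false_of_mem
      intro j _
      omega
    rw [hempty]
    simp only [Finset.sum_empty]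
    exact ⟨fun _ => 0, ⟨fun t _ => hS.2.1, by omega, by omega⟩, rfl, hμ0.symm⟩
  | succ m ih =>
    intro hm μ hμ hμmin
    have hmd : m < d := by omega
    set i : Fin d := ⟨m, hmd⟩ with hidef
    obtain ⟨μm, hμm, hμmmin⟩ := exists_W_min hS m
    obtain ⟨f1, hf1, hf10, hf1n⟩ := ih (by omega) μm hμm hμmmin
    -- identifications
    have hFW : Fprev S i = Wset S m := by
      ext β
      constructor
      · rintro ⟨hβS, hβj⟩
        exact ⟨hβS, fun j hj => hβj j (by rwa [Fin.lt_def])⟩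
      · rintro ⟨hβS, hβj⟩
        exact ⟨hβS, fun j hj => hβj j (by rwa [Fin.lt_def] at hj)⟩
    have hGW : Gset S i (μm i) = Wset S m := by
      ext β
      constructor
      · rintro ⟨hβF, -⟩
        rw [← hFW]
        exact hβF
      · intro hβ
        exact ⟨hFW ▸ hβ, hμmmin β hβ i⟩
    have hGW' : Gset S i (condD S i) = Wset S (m + 1) := by
      ext β
      constructor
      · rintro ⟨hβF, hβi⟩
        have hβW : β ∈ Wset S m := hFW ▸ hβF
        refine ⟨hβW.1, fun j hj => ?_⟩
        rcases Nat.lt_or_ge (j : ℕ) m with h | h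
        · exact hβW.2 j h
        · have hjm : (j : ℕ) = m := by omega
          have hji : j = i := Fin.ext hjm
          rw [hji]
          exact hβi
      · rintro ⟨hβS, hβj⟩
        refine ⟨?_, hβj i (Nat.lt_succ_self m)⟩
        rw [hFW]
        exact ⟨hβS, fun j hj => hβj j (by omega)⟩
    have haV : μm i ∈ Vset S i := by
      refine ⟨?_, μm, hFW ▸ hμm, rfl⟩
      exact hμmmin (condD S) (cond_mem_W hS m) i
    -- μm is min of Gset S i (μm i)
    have hμmG : μm ∈ Gset S i (μm i) := by rw [hGW]; exact hμm
    have hμmGmin : ∀ y ∈ Gset S i (μm i), μm ≤ y := by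
      intro y hy; rw [hGW] at hy; exact hμmmin y hy
    -- μ is min of Gset S i (condD S i)
    have hμG : μ ∈ Gset S i (condD S i) := by rw [hGW']; exact hμ
    have hμGmin : ∀ y ∈ Gset S i (condD S i), μ ≤ y := by
      intro y hy; rw [hGW'] at hy; exact hμmin y hy
    -- cardinality
    have hfinV : (Vset S i).Finite := Vset_finite hS i
    have hcard : {v ∈ Vset S i | μm i < v}.ncard = (Pset S i).ncard := by
      have hsub : {v ∈ Vset S i | μm i < v} = Vset S i \ {μm i} := by
        ext v
        constructor
        · rintro ⟨hv, hlt⟩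
          exact ⟨hv, by intro h; rw [Set.mem_singleton_iff] at h; omega⟩
        · rintro ⟨hv, hne⟩
          rw [Set.mem_singleton_iff] at hne
          refine ⟨hv, ?_⟩
          obtain ⟨hvc, β, hβ, hβi⟩ := hv
          have : μm ≤ β := hμmmin β (hFW ▸ hβ)
          have h2 : μm i ≤ v := by rw [← hβi]; exact this i
          omega
      rw [hsub, Set.ncard_diff_singleton_of_mem haV, Vset_eq hS i,
        Set.ncard_insert_of_notMem (fun h => by exact absurd h.2.1 (lt_irrefl _))
          (Pset_finite hS i)]
      omega
    obtain ⟨f2, hf2, hf20, hf2k⟩ := segment_chain hS i ((Pset S i).ncard) (μm i) haV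
      hcard μm hμmG hμmGmin μ hμG hμGmin
    -- concatenate
    have hconc := satchain_concat hf1 hf2 (by rw [hf1n, hf20])
    have hfilter : Finset.univ.filter (fun j : Fin d => (j : ℕ) < m + 1)
        = insert i (Finset.univ.filter (fun j : Fin d => (j : ℕ) < m)) := by
      ext j
      simp only [Finset.mem_filter, Finset.mem_univ, true_and, Finset.mem_insert]
      constructor
      · intro hj
        rcases Nat.lt_or_ge (j : ℕ) m with h | h
        · exact Or.inr (by simpa using h)
        · exact Or.inl (Fin.ext (show (j : ℕ) = m by omega))
      · rintro (rfl | hj)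
        · exact Nat.lt_succ_self m
        · omega
    have hnotmem : i ∉ Finset.univ.filter (fun j : Fin d => (j : ℕ) < m) := by
      simp only [Finset.mem_filter, Finset.mem_univ, true_and]
      exact fun h => Nat.lt_irrefl m h
    rw [hfilter, Finset.sum_insert hnotmem]
    set n1 := ∑ j ∈ Finset.univ.filter (fun j : Fin d => (j:ℕ) < m), (Pset S j).ncard with hn1
    set k := (Pset S i).ncard with hk
    refine ⟨fun t => if t ≤ n1 then f1 t else f2 (t - n1), ?_, ?_, ?_⟩
    · have h : k + n1 = n1 + k := by omega
      rw [h]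
      exact hconc
    · simp only [if_pos (Nat.zero_le _)]
      exact hf10
    · show (if k + n1 ≤ n1 then f1 (k + n1) else f2 (k + n1 - n1)) = μ
      by_cases hz : k = 0
      · rw [hz]
        simp only [zero_add, if_pos (le_refl n1)]
        rw [hf1n, ← hf20, ← hf2k, hz]
      · rw [if_neg (by omega), (show k + n1 - n1 = k by omega), hf2k]
  
end Segment

section Final

variable {S : Set (Fin d → ℤ)}

lemma chainDist_S_eval (hS : IsGoodD S) {α : Fin d → ℤ} (hα : condD S ≤ α) :
    chainDistD S 0 α
      = (∑ i, (Pset S i).ncard) + (∑ i, (α i - condD S i)).toNat := by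
  -- corner chain from 0 to condD S
  have hmind : ∀ y ∈ Wset S d, condD S ≤ y := fun y hy j => hy.2 j j.isLt
  obtain ⟨f1, hf1, hf10, hf1n⟩ := corner_chain_aux hS d le_rfl (condD S)
    (cond_mem_W hS d) (fun y hy => hmind y hy)
  have hfilter : Finset.univ.filter (fun j : Fin d => (j : ℕ) < d) = Finset.univ := by
    apply Finset.filter_true_of_mem
    intro j _
    exact j.isLt
  rw [hfilter] at hf1 hf1n
  -- unit chain from condD S to α
  set N := (∑ i, (α i - condD S i)).toNat with hN
  have hNsum : (∑ i, (α i - condD S i)) = (N : ℤ) := by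
    have := sumgap_nonneg hα
    omega
  obtain ⟨f2, hf20, hf2N, hstep⟩ := exists_unit_chain N (condD S) α hα hNsum
  have hmem2 : ∀ t ≤ N, f2 t ∈ S := by
    intro t ht
    rcases Nat.eq_or_lt_of_le ht with h | h
    · rw [h, hf2N]
      exact cond_mem hS α hα
    · exact cond_mem hS _ (hstep t h).1
  have hchain2 : IsSatChainD S N f2 := unit_chain_sat hf20 hf2N hstep hmem2
  have hconc := satchain_concat hf1 hchain2 (by rw [hf1n, hf20])
  apply chainDistD_eq_of_chain hS.2.2.2.1 hS.2.2.2.2.2 hconc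
  · simp only [if_pos (Nat.zero_le _)]
    exact hf10
  · set n1 := ∑ i, (Pset S i).ncard
    show (if n1 + N ≤ n1 then f1 (n1 + N) else f2 (n1 + N - n1)) = α
    by_cases hz : N = 0
    · rw [hz]
      simp only [add_zero, if_pos (le_refl n1)]
      rw [hf1n, ← hf20, ← hf2N, hz]
    · rw [if_neg (by omega), (show n1 + N - n1 = N by omega), hf2N]

lemma distD_eq_of {E F : Set (Fin d → ℤ)} {β₀ : Fin d → ℤ} {zval : ℤ}
    (hval : ∀ α ∈ F, β₀ ≤ α →
      (chainDistD E (minElD E) α : ℤ) - (chainDistD F (minElD F) α : ℤ) = zval)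
    (hdense : ∀ β : Fin d → ℤ, ∃ α ∈ F, β ≤ α ∧ β₀ ≤ α) :
    distD E F = zval := by
  have hset : {z : ℤ | ∃ β : Fin d → ℤ, ∀ α ∈ F, β ≤ α →
      (chainDistD E (minElD E) α : ℤ) - (chainDistD F (minElD F) α : ℤ) = z}
      = {zval} := by
    ext z
    simp only [Set.mem_setOf_eq, Set.mem_singleton_iff]
    constructor
    · rintro ⟨β, hβ⟩
      obtain ⟨α, hαF, hβα, hβ₀α⟩ := hdense β
      rw [← hβ α hαF hβα]
      exact hval α hαF hβ₀α
    · rintro rfl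
      exact ⟨β₀, fun α hα h => hval α hα h⟩
  rw [distD, hset, csSup_singleton]

theorem main_result (hS : IsGoodD S) :
    glenD S = (∑ i, ((Pset S i).ncard : ℤ)) ∧
    genusD S = ∑ i, (condD S i - ((Pset S i).ncard : ℤ)) := by
  have hciel : CIdealD S = {y | condD S ≤ y} := CIdeal_eq hS
  have hminS : minElD S = 0 := minElD_S hS
  have hminC : minElD (CIdealD S) = condD S :=
    minElD_upset (fun y => by rw [hciel]; exact Iff.rfl)
  have hminO : minElD (orthD d) = 0 :=
    minElD_upset (fun y => ⟨fun h i => h i, fun h i => h i⟩)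
  have hCIub : ∀ y ∈ CIdealD S, condD S ≤ y := fun y hy => hy.2
  have hCIub' : ∀ y, condD S ≤ y → y ∈ CIdealD S := fun y hy =>
    ⟨cond_mem hS y hy, hy⟩
  have hdenseCI : ∀ β : Fin d → ℤ, ∃ α ∈ CIdealD S, β ≤ α ∧ condD S ≤ α := by
    intro β
    exact ⟨β ⊔ condD S, hCIub' _ le_sup_right, le_sup_left, le_sup_right⟩
  have hdenseS : ∀ β : Fin d → ℤ, ∃ α ∈ S, β ≤ α ∧ condD S ≤ α := by
    intro β
    exact ⟨β ⊔ condD S, cond_mem hS _ le_sup_right, le_sup_left, le_sup_right⟩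
  constructor
  · unfold glenD
    apply distD_eq_of (β₀ := condD S) _ hdenseCI
    intro α hαF hcα
    rw [hminS, hminC, chainDist_S_eval hS hcα,
      chainDistD_upset hCIub hCIub' hcα]
    push_cast
    ring
  · unfold genusD
    apply distD_eq_of (β₀ := condD S) _ hdenseS
    intro α hαS hcα
    have h0α : (0 : Fin d → ℤ) ≤ α := le_trans (cond_nonneg hS) hcα
    have hOub : ∀ y ∈ orthD d, (0 : Fin d → ℤ) ≤ y := fun y hy i => hy i
    have hOub' : ∀ y, (0 : Fin d → ℤ) ≤ y → y ∈ orthD d := fun y hy i => hy i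
    rw [hminS, hminO, chainDistD_upset hOub hOub' h0α, chainDist_S_eval hS hcα]
    have h1 : (∑ i, (α i - (0 : Fin d → ℤ) i)) = ∑ i, α i := by
      apply Finset.sum_congr rfl
      intro i _
      simp
    have h2 : (∑ i, (α i - condD S i)) = (∑ i, α i) - ∑ i, condD S i :=
      Finset.sum_sub_distrib _ _
    have h3 : 0 ≤ ∑ i, (α i - condD S i) := sumgap_nonneg hcα
    have h4 : 0 ≤ (∑ i, (α i - (0:Fin d → ℤ) i)) := sumgap_nonneg h0α
    have h5 : (∑ i, (condD S i - ((Pset S i).ncard : ℤ)))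
        = (∑ i, condD S i) - ∑ i, ((Pset S i).ncard : ℤ) := Finset.sum_sub_distrib _ _
    rw [h5]
    rw [h1] at h4
    zify at *
    push_cast
    omega

end Final

end GoodAux

/-- For a local good semigroup `S ⊆ ℕ^d` with conductor
`(c₁,…,c_d)`, letting `P_i = {a ∈ ℕ : a < c_i` and there is `β ∈ S` with
`β_i = a` and `β_j = c_j` for all `j < i}`, one has
`l(S) = Σᵢ |P_i|` and `g(S) = Σᵢ (c_i − |P_i|)`. -/
theorem length_genus_proj_formula {d : ℕ} (S : Set (Fin d → ℤ))
    (hS : IsGoodD S) (hl : IsLocalD S) :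
    glenD S = ∑ i : Fin d,
      (({x : ℤ | 0 ≤ x ∧ x < condD S i ∧
          ∃ β ∈ S, β i = x ∧ ∀ j, j < i → β j = condD S j}.ncard : ℤ)) ∧
    genusD S = ∑ i : Fin d,
      (condD S i -
        ({x : ℤ | 0 ≤ x ∧ x < condD S i ∧
          ∃ β ∈ S, β i = x ∧ ∀ j, j < i → β j = condD S j}.ncard : ℤ)) := by
  exact GoodAux.main_result hS
end

section
/- Let S ⊆ ℕ² be a local good semigroup and let S₁, S₂ be its two coordinate projections (which are numerical semigroups). Then g(S) = g(S₁) + g(S₂) + |A_f(S)|, where g(S_i) = |ℕ∖S_i| is the number of gaps of S_i and A_f(S) is the set of finite maximals of S. -/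
/-- The ambient space `ℤ²`; `ℕ²` is identified with the nonnegative orthant. -/
abbrev Z2 : Type := ℤ × ℤ

/-- The nonnegative orthant, representing `ℕ² ⊆ ℤ²`. -/
def orth : Set Z2 := {a : Z2 | 0 ≤ a.1 ∧ 0 ≤ a.2}

/-- Property (G1): closure under componentwise minimum. -/
def MinClosed (E : Set Z2) : Prop := ∀ a ∈ E, ∀ b ∈ E, a ⊓ b ∈ E

/-- Property (G3). -/
def G3P (E : Set Z2) : Prop :=
  ∀ a ∈ E, ∀ b ∈ E, a ≠ b →
    (a.1 = b.1 →
      ∃ e ∈ E, a.1 < e.1 ∧ min a.2 b.2 ≤ e.2 ∧ (a.2 ≠ b.2 → e.2 = min a.2 b.2)) ∧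
    (a.2 = b.2 →
      ∃ e ∈ E, a.2 < e.2 ∧ min a.1 b.1 ≤ e.1 ∧ (a.1 ≠ b.1 → e.1 = min a.1 b.1))

/-- A good semigroup of `ℕ²` (viewed inside `ℤ²`). -/
def IsGood (S : Set Z2) : Prop :=
  S ⊆ orth ∧ (0 : Z2) ∈ S ∧ (∀ a ∈ S, ∀ b ∈ S, a + b ∈ S) ∧
  MinClosed S ∧ (∃ δ : Z2, ∀ y : Z2, δ ≤ y → y ∈ S) ∧ G3P S

/-- A good semigroup is local if its only element with a zero coordinate is `0`. -/
def IsLocal (S : Set Z2) : Prop := ∀ a ∈ S, (a.1 = 0 ∨ a.2 = 0) → a = 0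

/-- A relative good ideal of `S`. -/
def IsRelGoodIdeal (S E : Set Z2) : Prop :=
  E.Nonempty ∧ (∀ e ∈ E, ∀ s ∈ S, e + s ∈ E) ∧ (∃ a ∈ S, ∀ e ∈ E, a + e ∈ S) ∧
  MinClosed E ∧ G3P E

/-- A saturated chain of length `n` in `E`. -/
def IsSatChain (E : Set Z2) (n : ℕ) (f : ℕ → Z2) : Prop :=
  (∀ i ≤ n, f i ∈ E) ∧ (∀ i < n, f i < f (i + 1)) ∧
  (∀ i < n, ∀ c ∈ E, ¬ (f i < c ∧ c < f (i + 1)))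

/-- `d_E(a,b)`: the common length of all saturated chains in `E` from `a` to `b`. -/
noncomputable def chainDist (E : Set Z2) (a b : Z2) : ℕ :=
  sSup {n : ℕ | ∃ f : ℕ → Z2, IsSatChain E n f ∧ f 0 = a ∧ f n = b}

/-- The (componentwise) minimal element `e(E)` of `E`. -/
noncomputable def minEl (E : Set Z2) : Z2 :=
  (sInf (Prod.fst '' E), sInf (Prod.snd '' E))

/-- The distance `d(E∖F)` between `F ⊆ E`: the common value of
`d_E(e(E),α) - d_F(e(F),α)` for all sufficiently large `α ∈ F`. -/
noncomputable def dist2 (E F : Set Z2) : ℤ :=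
  sSup {z : ℤ | ∃ β : Z2, ∀ α ∈ F, β ≤ α →
    (chainDist E (minEl E) α : ℤ) - (chainDist F (minEl F) α : ℤ) = z}

/-- The conductor `c(E)`: the componentwise minimal `δ` with `δ + ℕ² ⊆ E`. -/
noncomputable def condE (E : Set Z2) : Z2 :=
  (sInf ((fun δ : Z2 => δ.1) '' {δ : Z2 | ∀ y : Z2, δ ≤ y → y ∈ E}),
   sInf ((fun δ : Z2 => δ.2) '' {δ : Z2 | ∀ y : Z2, δ ≤ y → y ∈ E}))

/-- The conductor ideal `C(E) = {β ∈ E : β ≥ c(E)}`. -/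
noncomputable def CIdeal (E : Set Z2) : Set Z2 := {b ∈ E | condE E ≤ b}

/-- The length `l(E) = d(E ∖ C(E))`. -/
noncomputable def glen (E : Set Z2) : ℤ := dist2 E (CIdeal E)

/-- The genus `g(E) = d(ℕ² ∖ E)`. -/
noncomputable def genus (E : Set Z2) : ℤ := dist2 orth E

/-- The good semigroup `ℕ²(1,1) = {0} ∪ ((1,1) + ℕ²)`. -/
def N2oneone : Set Z2 := {a : Z2 | a = 0 ∨ ((1 : ℤ), (1 : ℤ)) ≤ a}

/-- `Δ(a) = Δ₁(a) ∪ Δ₂(a)` for `a ∈ ℤ²`. -/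
def DeltaUp (a : Z2) : Set Z2 :=
  {b : Z2 | (b.1 = a.1 ∧ a.2 < b.2) ∨ (b.2 = a.2 ∧ a.1 < b.1)}

/-- `A_f(S)`: the finite maximals of `S`, i.e. `a ∈ S` with `Δ^S(a) = ∅`. -/
def Af (S : Set Z2) : Set Z2 := {a ∈ S | S ∩ DeltaUp a = ∅}

/-! ### Auxiliary development -/

section AuxGood

/-- Count of elements of `T ⊆ ℤ` in `[0, x)`. -/
noncomputable def nvv (T : Set ℤ) (x : ℤ) : ℕ := (T ∩ Set.Ico 0 x).ncard

/-- Strict lower-left box below `b`. -/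
def boxx (b : Z2) : Set Z2 := {m : Z2 | m.1 < b.1 ∧ m.2 < b.2}

/-- Count of finite maximals in the box below `b`. -/
noncomputable def mvv (S : Set Z2) (b : Z2) : ℕ := (Af S ∩ boxx b).ncard

/-- The rank function. -/
noncomputable def rk (S : Set Z2) (b : Z2) : ℤ :=
  (nvv (Prod.fst '' S) b.1 : ℤ) + (nvv (Prod.snd '' S) b.2 : ℤ) - (mvv S b : ℤ)

lemma af_mem_S {S : Set Z2} {m : Z2} (h : m ∈ Af S) : m ∈ S := h.1

lemma af_not_delta {S : Set Z2} {m : Z2} (h : m ∈ Af S) {s : Z2}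
    (hs : s ∈ S) (hd : s ∈ DeltaUp m) : False := by
  have : s ∈ S ∩ DeltaUp m := ⟨hs, hd⟩
  rw [h.2] at this
  exact this

lemma af_fst_injOn (S : Set Z2) : Set.InjOn Prod.fst (Af S) := by
  intro m hm m' hm' h
  by_contra hne
  have h2 : m.2 ≠ m'.2 := fun h2 => hne (Prod.ext h h2)
  rcases lt_or_gt_of_ne h2 with hlt | hlt
  · exact af_not_delta hm hm'.1 (Or.inl ⟨h.symm, hlt⟩)
  · exact af_not_delta hm' hm.1 (Or.inl ⟨h, hlt⟩)

lemma af_snd_injOn (S : Set Z2) : Set.InjOn Prod.snd (Af S) := by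
  intro m hm m' hm' h
  by_contra hne
  have h1 : m.1 ≠ m'.1 := fun h1 => hne (Prod.ext h1 h)
  rcases lt_or_gt_of_ne h1 with hlt | hlt
  · exact af_not_delta hm hm'.1 (Or.inr ⟨h.symm, hlt⟩)
  · exact af_not_delta hm' hm.1 (Or.inr ⟨h, hlt⟩)

/-- Existence of a column maximum, which is a finite maximal. -/
lemma col_max {S : Set Z2} (hG3 : G3P S) {x B : ℤ} (hne : ∃ y, (x, y) ∈ S)
    (hbd : ∀ y, (x, y) ∈ S → y ≤ B) :
    ∃ m ∈ Af S, m.1 = x ∧ (∀ y, (x, y) ∈ S → y ≤ m.2) := by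
  obtain ⟨ym, hym, hmax⟩ := Int.exists_greatest_of_bdd ⟨B, hbd⟩ hne
  refine ⟨(x, ym), ⟨hym, ?_⟩, rfl, hmax⟩
  apply Set.eq_empty_iff_forall_notMem.mpr
  rintro s ⟨hs, hd⟩
  rcases hd with ⟨h1, h2⟩ | ⟨h1, h2⟩
  · have hs' : (x, s.2) ∈ S := by
      rw [show x = s.1 from h1.symm, Prod.mk.eta]; exact hs
    have := hmax s.2 hs'
    simp only at h2
    omega
  · have hneq : (x, ym) ≠ s := by
      intro h
      rw [← h] at h2
      simp only at h2
      omega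
    obtain ⟨-, hsec⟩ := hG3 (x, ym) hym s hs hneq
    obtain ⟨e, he, he2, -, hfst⟩ := hsec (by simpa using h1.symm)
    simp only at he2 hfst
    have hx : e.1 = x := by
      rw [hfst (by simpa using h2.ne)]
      exact min_eq_left h2.le
    have heS : (x, e.2) ∈ S := by rw [← hx, Prod.mk.eta]; exact he
    have := hmax e.2 heS
    omega

/-- Existence of a row maximum, which is a finite maximal. -/
lemma row_max {S : Set Z2} (hG3 : G3P S) {y B : ℤ} (hne : ∃ x, (x, y) ∈ S)
    (hbd : ∀ x, (x, y) ∈ S → x ≤ B) :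
    ∃ m ∈ Af S, m.2 = y ∧ (∀ x, (x, y) ∈ S → x ≤ m.1) := by
  obtain ⟨xm, hxm, hmax⟩ := Int.exists_greatest_of_bdd ⟨B, hbd⟩ hne
  refine ⟨(xm, y), ⟨hxm, ?_⟩, rfl, hmax⟩
  apply Set.eq_empty_iff_forall_notMem.mpr
  rintro s ⟨hs, hd⟩
  rcases hd with ⟨h1, h2⟩ | ⟨h1, h2⟩
  · have hneq : (xm, y) ≠ s := by
      intro h
      rw [← h] at h2
      simp only at h2
      omega
    obtain ⟨hfstc, -⟩ := hG3 (xm, y) hxm s hs hneq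
    obtain ⟨e, he, he2, -, hsnd⟩ := hfstc (by simpa using h1.symm)
    simp only at he2 hsnd
    have hy : e.2 = y := by
      rw [hsnd (by simpa using h2.ne)]
      exact min_eq_left h2.le
    have heS : (e.1, y) ∈ S := by rw [← hy, Prod.mk.eta]; exact he
    have := hmax e.1 heS
    omega
  · have hs' : (s.1, y) ∈ S := by
      rw [show y = s.2 from h1.symm, Prod.mk.eta]; exact hs
    have := hmax s.1 hs'
    simp only at h2
    omega

end AuxGood

section CoverLemmas

lemma af_inter_boxx_finite {S : Set Z2} (hsub : S ⊆ orth) (b : Z2) :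
    (Af S ∩ boxx b).Finite := by
  apply (Set.finite_Icc (0 : Z2) b).subset
  rintro m ⟨hm, h1, h2⟩
  have ho := hsub hm.1
  exact ⟨Prod.le_def.mpr ⟨ho.1, ho.2⟩, Prod.le_def.mpr ⟨h1.le, h2.le⟩⟩

lemma nvv_finite (T : Set ℤ) (s t : ℤ) : (T ∩ Set.Ico s t).Finite :=
  (Set.finite_Ico s t).subset Set.inter_subset_right

lemma nvv_split {T : Set ℤ} {a b : ℤ} (h0 : 0 ≤ a) (hab : a < b) (ha : a ∈ T) :
    nvv T b = nvv T a + 1 + (T ∩ Set.Ioo a b).ncard := by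
  have h1 : T ∩ Set.Ico 0 b = (T ∩ Set.Ico 0 a) ∪ (T ∩ Set.Ico a b) := by
    rw [← Set.inter_union_distrib_left, Set.Ico_union_Ico_eq_Ico h0 hab.le]
  have h2 : T ∩ Set.Ico a b = insert a (T ∩ Set.Ioo a b) := by
    rw [← Set.Ioo_insert_left hab, Set.inter_insert_of_mem ha]
  have hdisj : Disjoint (T ∩ Set.Ico 0 a) (T ∩ Set.Ico a b) := by
    apply Set.disjoint_left.mpr
    rintro x ⟨-, -, hx2⟩ ⟨-, hx3, -⟩
    exact absurd hx3 (not_le.mpr hx2)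
  have hfin2 : (T ∩ Set.Ioo a b).Finite :=
    (Set.finite_Ioo a b).subset Set.inter_subset_right
  unfold nvv
  rw [h1, Set.ncard_union_eq hdisj (nvv_finite T 0 a) (nvv_finite T a b), h2,
    Set.ncard_insert_of_notMem (fun h => lt_irrefl a h.2.1) hfin2]
  omega

/-- Horizontal cover: the rank increases by exactly 1. -/
lemma rk_cover_horiz {S : Set Z2} (hsub : S ⊆ orth) (hmin : MinClosed S) (hG3 : G3P S)
    {β γ : Z2} (hb : β ∈ S) (hg : γ ∈ S) (h1 : β.1 < γ.1) (h2 : β.2 = γ.2)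
    (hcov : ∀ c ∈ S, ¬(β < c ∧ c < γ)) : rk S γ = rk S β + 1 := by
  -- every element of S in the open vertical strip has second coordinate < β.2
  have hcol : ∀ s ∈ S, β.1 < s.1 → s.1 < γ.1 → s.2 < β.2 := by
    intro s hs hx1 hx2
    by_contra hge
    push_neg at hge
    have hw : s ⊓ γ ∈ S := hmin s hs γ hg
    have hw1 : (s ⊓ γ).1 = s.1 := inf_eq_left.mpr hx2.le
    have hw2 : (s ⊓ γ).2 = γ.2 := inf_eq_right.mpr (h2 ▸ hge)
    apply hcov _ hw
    constructor
    · exact Prod.lt_iff.mpr (Or.inl ⟨by omega, by rw [hw2, ← h2]⟩)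
    · exact Prod.lt_iff.mpr (Or.inl ⟨by omega, by rw [hw2]⟩)
  set A := Af S with hA
  set D := (A ∩ boxx γ) \ (A ∩ boxx β) with hDdef
  set X := (Prod.fst '' S) ∩ Set.Ioo β.1 γ.1 with hX
  have hsubD : A ∩ boxx β ⊆ A ∩ boxx γ := by
    rintro m ⟨hm, hb1, hb2⟩
    exact ⟨hm, by omega, by omega⟩
  have hMcard : D.ncard + mvv S β = mvv S γ :=
    Set.ncard_diff_add_ncard_of_subset hsubD (af_inter_boxx_finite hsub γ)
  have himg : Prod.fst '' D = X := by
    apply Set.Subset.antisymm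
    · rintro x ⟨m, ⟨⟨hmA, hm1, hm2⟩, hnot⟩, rfl⟩
      have hm2' : m.2 < β.2 := h2 ▸ hm2
      have hge : ¬ m.1 < β.1 := fun h => hnot ⟨hmA, h, hm2'⟩
      have hne : β.1 ≠ m.1 := by
        intro he
        exact af_not_delta hmA hb (Or.inl ⟨he, hm2'⟩)
      exact ⟨⟨m, hmA.1, rfl⟩, by omega, hm1⟩
    · rintro x ⟨⟨s, hs, rfl⟩, hx1, hx2⟩
      have hbd : ∀ y, (s.1, y) ∈ S → y ≤ β.2 - 1 := by
        intro y hy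
        have := hcol (s.1, y) hy hx1 hx2
        simp only at this
        omega
      obtain ⟨m, hmA, hm1, hmax⟩ :=
        col_max hG3 ⟨s.2, by rw [Prod.mk.eta]; exact hs⟩ hbd
      have hmS : (s.1, m.2) ∈ S := by rw [← hm1, Prod.mk.eta]; exact hmA.1
      have hm2 : m.2 < β.2 := by have := hbd m.2 hmS; omega
      refine ⟨m, ⟨⟨hmA, by omega, by omega⟩, ?_⟩, hm1⟩
      rintro ⟨-, hb1, -⟩
      omega
  have hDfin : D.Finite := (af_inter_boxx_finite hsub γ).subset Set.diff_subset
  have hDcard : D.ncard = X.ncard := by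
    rw [← himg, Set.ncard_image_of_injOn
      ((af_fst_injOn S).mono (Set.diff_subset.trans Set.inter_subset_left))]
  have hb1pos : 0 ≤ β.1 := (hsub hb).1
  have hN1 : nvv (Prod.fst '' S) γ.1 = nvv (Prod.fst '' S) β.1 + 1 + X.ncard :=
    nvv_split hb1pos h1 ⟨β, hb, rfl⟩
  simp only [rk]
  rw [← h2, hN1]
  push_cast
  omega

/-- Vertical cover: the rank increases by exactly 1. -/
lemma rk_cover_vert {S : Set Z2} (hsub : S ⊆ orth) (hmin : MinClosed S) (hG3 : G3P S)
    {β γ : Z2} (hb : β ∈ S) (hg : γ ∈ S) (h1 : β.1 = γ.1) (h2 : β.2 < γ.2)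
    (hcov : ∀ c ∈ S, ¬(β < c ∧ c < γ)) : rk S γ = rk S β + 1 := by
  have hrow : ∀ s ∈ S, β.2 < s.2 → s.2 < γ.2 → s.1 < β.1 := by
    intro s hs hx1 hx2
    by_contra hge
    push_neg at hge
    have hw : s ⊓ γ ∈ S := hmin s hs γ hg
    have hw2 : (s ⊓ γ).2 = s.2 := inf_eq_left.mpr hx2.le
    have hw1 : (s ⊓ γ).1 = γ.1 := inf_eq_right.mpr (h1 ▸ hge)
    apply hcov _ hw
    constructor
    · exact Prod.lt_iff.mpr (Or.inr ⟨by rw [hw1, ← h1], by omega⟩)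
    · exact Prod.lt_iff.mpr (Or.inr ⟨by rw [hw1], by omega⟩)
  set A := Af S with hA
  set D := (A ∩ boxx γ) \ (A ∩ boxx β) with hDdef
  set Y := (Prod.snd '' S) ∩ Set.Ioo β.2 γ.2 with hY
  have hsubD : A ∩ boxx β ⊆ A ∩ boxx γ := by
    rintro m ⟨hm, hb1, hb2⟩
    exact ⟨hm, by omega, by omega⟩
  have hMcard : D.ncard + mvv S β = mvv S γ :=
    Set.ncard_diff_add_ncard_of_subset hsubD (af_inter_boxx_finite hsub γ)
  have himg : Prod.snd '' D = Y := by
    apply Set.Subset.antisymm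
    · rintro y ⟨m, ⟨⟨hmA, hm1, hm2⟩, hnot⟩, rfl⟩
      have hm1' : m.1 < β.1 := h1 ▸ hm1
      have hge : ¬ m.2 < β.2 := fun h => hnot ⟨hmA, hm1', h⟩
      have hne : β.2 ≠ m.2 := by
        intro he
        exact af_not_delta hmA hb (Or.inr ⟨he, hm1'⟩)
      exact ⟨⟨m, hmA.1, rfl⟩, by omega, hm2⟩
    · rintro y ⟨⟨s, hs, rfl⟩, hy1, hy2⟩
      have hbd : ∀ x, (x, s.2) ∈ S → x ≤ β.1 - 1 := by
        intro x hx
        have := hrow (x, s.2) hx hy1 hy2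
        simp only at this
        omega
      obtain ⟨m, hmA, hm2, hmax⟩ :=
        row_max hG3 ⟨s.1, by rw [Prod.mk.eta]; exact hs⟩ hbd
      have hmS : (m.1, s.2) ∈ S := by rw [← hm2, Prod.mk.eta]; exact hmA.1
      have hm1 : m.1 < β.1 := by have := hbd m.1 hmS; omega
      refine ⟨m, ⟨⟨hmA, by omega, by omega⟩, ?_⟩, hm2⟩
      rintro ⟨-, -, hb2⟩
      omega
  have hDfin : D.Finite := (af_inter_boxx_finite hsub γ).subset Set.diff_subset
  have hDcard : D.ncard = Y.ncard := by
    rw [← himg, Set.ncard_image_of_injOn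
      ((af_snd_injOn S).mono (Set.diff_subset.trans Set.inter_subset_left))]
  have hb2pos : 0 ≤ β.2 := (hsub hb).2
  have hN2 : nvv (Prod.snd '' S) γ.2 = nvv (Prod.snd '' S) β.2 + 1 + Y.ncard :=
    nvv_split hb2pos h2 ⟨β, hb, rfl⟩
  simp only [rk]
  rw [← h1, hN2]
  push_cast
  omega

end CoverLemmas

section DiagCover

/-- Diagonal cover: the rank increases by exactly 1. -/
lemma rk_cover_diag {S : Set Z2} (hsub : S ⊆ orth) (hmin : MinClosed S) (hG3 : G3P S)
    {β γ : Z2} (hb : β ∈ S) (hg : γ ∈ S) (h1 : β.1 < γ.1) (h2 : β.2 < γ.2)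
    (hcov : ∀ c ∈ S, ¬(β < c ∧ c < γ)) : rk S γ = rk S β + 1 := by
  -- columns in the open strip stay strictly below β.2
  have hcol : ∀ s ∈ S, β.1 < s.1 → s.1 < γ.1 → s.2 < β.2 := by
    intro s hs hx1 hx2
    by_contra hge
    push_neg at hge
    have hw : s ⊓ γ ∈ S := hmin s hs γ hg
    have hw1 : (s ⊓ γ).1 = s.1 := inf_eq_left.mpr hx2.le
    have hw2 : β.2 ≤ (s ⊓ γ).2 := le_inf hge h2.le
    apply hcov _ hw
    have hwg : (s ⊓ γ).2 ≤ γ.2 := inf_le_right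
    constructor
    · exact Prod.lt_iff.mpr (Or.inl ⟨by omega, hw2⟩)
    · exact Prod.lt_iff.mpr (Or.inl ⟨by omega, hwg⟩)
  have hrow : ∀ s ∈ S, β.2 < s.2 → s.2 < γ.2 → s.1 < β.1 := by
    intro s hs hx1 hx2
    by_contra hge
    push_neg at hge
    have hw : s ⊓ γ ∈ S := hmin s hs γ hg
    have hw2 : (s ⊓ γ).2 = s.2 := inf_eq_left.mpr hx2.le
    have hw1 : β.1 ≤ (s ⊓ γ).1 := le_inf hge h1.le
    apply hcov _ hw
    have hwg : (s ⊓ γ).1 ≤ γ.1 := inf_le_right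
    constructor
    · exact Prod.lt_iff.mpr (Or.inr ⟨hw1, by omega⟩)
    · exact Prod.lt_iff.mpr (Or.inr ⟨hwg, by omega⟩)
  -- β itself is a finite maximal
  have hbAf : β ∈ Af S := by
    refine ⟨hb, Set.eq_empty_iff_forall_notMem.mpr ?_⟩
    rintro s ⟨hs, hd⟩
    have hw : s ⊓ γ ∈ S := hmin s hs γ hg
    rcases hd with ⟨e1, e2⟩ | ⟨e1, e2⟩
    · -- s.1 = β.1, β.2 < s.2
      apply hcov _ hw
      have hw1 : (s ⊓ γ).1 = β.1 := by
        rw [show (s ⊓ γ).1 = s.1 ⊓ γ.1 from rfl, e1]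
        exact inf_eq_left.mpr h1.le
      have hw2 : β.2 < (s ⊓ γ).2 := lt_inf_iff.mpr ⟨e2, h2⟩
      constructor
      · exact Prod.lt_iff.mpr (Or.inr ⟨hw1.ge, hw2⟩)
      · exact Prod.lt_iff.mpr (Or.inl ⟨by omega, inf_le_right⟩)
    · -- s.2 = β.2, β.1 < s.1
      apply hcov _ hw
      have hw2 : (s ⊓ γ).2 = β.2 := by
        rw [show (s ⊓ γ).2 = s.2 ⊓ γ.2 from rfl, e1]
        exact inf_eq_left.mpr h2.le
      have hw1 : β.1 < (s ⊓ γ).1 := lt_inf_iff.mpr ⟨e2, h1⟩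
      constructor
      · exact Prod.lt_iff.mpr (Or.inl ⟨hw1, hw2.ge⟩)
      · exact Prod.lt_iff.mpr (Or.inr ⟨inf_le_right, by omega⟩)
  set A := Af S with hA
  set D := (A ∩ boxx γ) \ (A ∩ boxx β) with hDdef
  set X := (Prod.fst '' S) ∩ Set.Ioo β.1 γ.1 with hX
  set Y := (Prod.snd '' S) ∩ Set.Ioo β.2 γ.2 with hY
  set D1 := {m ∈ D | β.1 < m.1} with hD1
  set D2 := {m ∈ D | β.2 < m.2} with hD2
  have hsubD : A ∩ boxx β ⊆ A ∩ boxx γ := by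
    rintro m ⟨hm, hb1, hb2⟩
    exact ⟨hm, by omega, by omega⟩
  have hMcard : D.ncard + mvv S β = mvv S γ :=
    Set.ncard_diff_add_ncard_of_subset hsubD (af_inter_boxx_finite hsub γ)
  have hDfin : D.Finite := (af_inter_boxx_finite hsub γ).subset Set.diff_subset
  have hbD : β ∈ D := by
    refine ⟨⟨hbAf, h1, h2⟩, ?_⟩
    rintro ⟨-, hb1, -⟩
    omega
  -- decomposition of D
  have hDeq : D = insert β (D1 ∪ D2) := by
    apply Set.Subset.antisymm
    · rintro m hmD
      obtain ⟨⟨hmA, hg1, hg2⟩, hnot⟩ := hmD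
      rcases lt_trichotomy β.1 m.1 with hl | he | hl
      · exact Set.mem_insert_of_mem _ (Or.inl ⟨⟨⟨hmA, hg1, hg2⟩, hnot⟩, hl⟩)
      · rcases lt_trichotomy m.2 β.2 with hl2 | he2 | hl2
        · exact absurd (af_not_delta hmA hb (Or.inl ⟨he, hl2⟩)) not_false
        · exact Set.mem_insert_iff.mpr (Or.inl (Prod.ext he.symm he2))
        · exfalso
          apply hcov m hmA.1
          constructor
          · exact Prod.lt_iff.mpr (Or.inr ⟨he.le, hl2⟩)
          · exact Prod.lt_iff.mpr (Or.inl ⟨by omega, hg2.le⟩)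
      · have hge2 : ¬ m.2 < β.2 := fun h => hnot ⟨hmA, hl, h⟩
        rcases lt_or_eq_of_le (not_lt.mp hge2) with hl2 | he2
        · exact Set.mem_insert_of_mem _ (Or.inr ⟨⟨⟨hmA, hg1, hg2⟩, hnot⟩, hl2⟩)
        · exact absurd (af_not_delta hmA hb (Or.inr ⟨he2, hl⟩)) not_false
    · intro m hm
      rcases Set.mem_insert_iff.mp hm with rfl | hm'
      · exact hbD
      · rcases hm' with ⟨hmD, -⟩ | ⟨hmD, -⟩ <;> exact hmD
  have hbnot : β ∉ D1 ∪ D2 := by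
    rintro (⟨-, hl⟩ | ⟨-, hl⟩) <;> omega
  have hdisj12 : Disjoint D1 D2 := by
    apply Set.disjoint_left.mpr
    rintro m ⟨⟨⟨hmA, hg1, hg2⟩, -⟩, hl1⟩ ⟨-, hl2⟩
    apply hcov m hmA.1
    constructor
    · exact Prod.lt_iff.mpr (Or.inl ⟨hl1, hl2.le⟩)
    · exact Prod.lt_iff.mpr (Or.inl ⟨hg1, hg2.le⟩)
  have hD1fin : D1.Finite := hDfin.subset (Set.sep_subset _ _)
  have hD2fin : D2.Finite := hDfin.subset (Set.sep_subset _ _)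
  have hDcards : D.ncard = 1 + D1.ncard + D2.ncard := by
    rw [hDeq, Set.ncard_insert_of_notMem hbnot (hD1fin.union hD2fin),
      Set.ncard_union_eq hdisj12 hD1fin hD2fin]
    omega
  -- D1 ↔ X
  have himg1 : Prod.fst '' D1 = X := by
    apply Set.Subset.antisymm
    · rintro x ⟨m, ⟨⟨⟨hmA, hg1, hg2⟩, -⟩, hl⟩, rfl⟩
      exact ⟨⟨m, hmA.1, rfl⟩, hl, hg1⟩
    · rintro x ⟨⟨s, hs, rfl⟩, hx1, hx2⟩
      have hbd : ∀ y, (s.1, y) ∈ S → y ≤ β.2 - 1 := by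
        intro y hy
        have := hcol (s.1, y) hy hx1 hx2
        simp only at this
        omega
      obtain ⟨m, hmA, hm1, hmax⟩ :=
        col_max hG3 ⟨s.2, by rw [Prod.mk.eta]; exact hs⟩ hbd
      have hmS : (s.1, m.2) ∈ S := by rw [← hm1, Prod.mk.eta]; exact hmA.1
      have hm2 : m.2 < β.2 := by have := hbd m.2 hmS; omega
      refine ⟨m, ⟨⟨⟨hmA, by omega, by omega⟩, ?_⟩, by omega⟩, hm1⟩
      rintro ⟨-, hb1, -⟩
      omega
  have himg2 : Prod.snd '' D2 = Y := by
    apply Set.Subset.antisymm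
    · rintro y ⟨m, ⟨⟨⟨hmA, hg1, hg2⟩, -⟩, hl⟩, rfl⟩
      exact ⟨⟨m, hmA.1, rfl⟩, hl, hg2⟩
    · rintro y ⟨⟨s, hs, rfl⟩, hy1, hy2⟩
      have hbd : ∀ x, (x, s.2) ∈ S → x ≤ β.1 - 1 := by
        intro x hx
        have := hrow (x, s.2) hx hy1 hy2
        simp only at this
        omega
      obtain ⟨m, hmA, hm2, hmax⟩ :=
        row_max hG3 ⟨s.1, by rw [Prod.mk.eta]; exact hs⟩ hbd
      have hmS : (m.1, s.2) ∈ S := by rw [← hm2, Prod.mk.eta]; exact hmA.1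
      have hm1 : m.1 < β.1 := by have := hbd m.1 hmS; omega
      refine ⟨m, ⟨⟨⟨hmA, by omega, by omega⟩, ?_⟩, by omega⟩, hm2⟩
      rintro ⟨-, -, hb2⟩
      omega
  have hD1card : D1.ncard = X.ncard := by
    rw [← himg1, Set.ncard_image_of_injOn ((af_fst_injOn S).mono
      (fun m hm => (Set.diff_subset.trans Set.inter_subset_left) hm.1))]
  have hD2card : D2.ncard = Y.ncard := by
    rw [← himg2, Set.ncard_image_of_injOn ((af_snd_injOn S).mono
      (fun m hm => (Set.diff_subset.trans Set.inter_subset_left) hm.1))]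
  have hb1pos : 0 ≤ β.1 := (hsub hb).1
  have hb2pos : 0 ≤ β.2 := (hsub hb).2
  have hN1 : nvv (Prod.fst '' S) γ.1 = nvv (Prod.fst '' S) β.1 + 1 + X.ncard :=
    nvv_split hb1pos h1 ⟨β, hb, rfl⟩
  have hN2 : nvv (Prod.snd '' S) γ.2 = nvv (Prod.snd '' S) β.2 + 1 + Y.ncard :=
    nvv_split hb2pos h2 ⟨β, hb, rfl⟩
  simp only [rk]
  rw [hN1, hN2]
  push_cast
  omega

/-- Any cover in `S` increases `rk` by exactly 1. -/
lemma rk_cover {S : Set Z2} (hsub : S ⊆ orth) (hmin : MinClosed S) (hG3 : G3P S)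
    {β γ : Z2} (hb : β ∈ S) (hg : γ ∈ S) (hlt : β < γ)
    (hcov : ∀ c ∈ S, ¬(β < c ∧ c < γ)) : rk S γ = rk S β + 1 := by
  obtain ⟨hle1, hle2⟩ := Prod.le_def.mp hlt.le
  rcases eq_or_lt_of_le hle1 with e1 | l1
  · rcases eq_or_lt_of_le hle2 with e2 | l2
    · exact absurd (Prod.ext e1 e2) hlt.ne
    · exact rk_cover_vert hsub hmin hG3 hb hg e1 l2 hcov
  · rcases eq_or_lt_of_le hle2 with e2 | l2
    · exact rk_cover_horiz hsub hmin hG3 hb hg l1 e2 hcov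
    · exact rk_cover_diag hsub hmin hG3 hb hg l1 l2 hcov

end DiagCover

section Chains

lemma satchain_rk {S : Set Z2} (hsub : S ⊆ orth) (hmin : MinClosed S) (hG3 : G3P S)
    {n : ℕ} {f : ℕ → Z2} (hf : IsSatChain S n f) :
    ∀ i ≤ n, rk S (f i) = rk S (f 0) + i := by
  intro i
  induction i with
  | zero => intro _; simp
  | succ k ih =>
    intro hk
    have hkn : k < n := Nat.lt_of_succ_le hk
    have hcov := rk_cover hsub hmin hG3 (hf.1 k hkn.le) (hf.1 (k + 1) hk)
      (hf.2.1 k hkn) (fun c hc => hf.2.2 k hkn c hc)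
    rw [hcov, ih hkn.le]
    push_cast
    ring

lemma exists_cover (S : Set Z2) {a b : Z2} (hb : b ∈ S) (hab : a < b) :
    ∃ g ∈ S, a < g ∧ g ≤ b ∧ ∀ c ∈ S, ¬(a < c ∧ c < g) := by
  set T := {d ∈ S | a < d ∧ d ≤ b} with hT
  have hfin : T.Finite := (Set.finite_Icc a b).subset (fun d hd => ⟨hd.2.1.le, hd.2.2⟩)
  have hne : T.Nonempty := ⟨b, hb, hab, le_refl b⟩
  obtain ⟨g, hgT, hgmin'⟩ := Set.Finite.exists_minimalFor id T hfin hne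
  have hgmin : ∀ c ∈ T, id c ≤ id g → id g = id c := fun c hc h => le_antisymm (hgmin' hc h) h
  refine ⟨g, hgT.1, hgT.2.1, hgT.2.2, ?_⟩
  rintro c hc ⟨h1, h2⟩
  have hcT : c ∈ T := ⟨hc, h1, h2.le.trans hgT.2.2⟩
  exact h2.ne ((hgmin c hcT h2.le).symm)

lemma exists_satchain {S : Set Z2} (hsub : S ⊆ orth) (hmin : MinClosed S) (hG3 : G3P S) :
    ∀ k : ℕ, ∀ a ∈ S, ∀ b ∈ S, a ≤ b → (b.1 + b.2 - a.1 - a.2).toNat ≤ k →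
    ∃ n f, IsSatChain S n f ∧ f 0 = a ∧ f n = b := by
  intro k
  induction k with
  | zero =>
    intro a ha b hb hab hm
    obtain ⟨h1, h2⟩ := Prod.le_def.mp hab
    have hba : b = a := Prod.ext (by omega) (by omega)
    exact ⟨0, fun _ => a, ⟨fun i _ => ha, fun i h => absurd h (Nat.not_lt_zero i),
      fun i h => absurd h (Nat.not_lt_zero i)⟩, rfl, hba.symm⟩
  | succ k ih =>
    intro a ha b hb hab hm
    rcases eq_or_ne a b with rfl | hne
    · exact ⟨0, fun _ => a, ⟨fun i _ => ha, fun i h => absurd h (Nat.not_lt_zero i),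
        fun i h => absurd h (Nat.not_lt_zero i)⟩, rfl, rfl⟩
    · obtain ⟨g, hgS, hag, hgb, hcov⟩ := exists_cover S hb (lt_of_le_of_ne hab hne)
      have hgb' := Prod.le_def.mp hgb
      have hag' := Prod.le_def.mp hag.le
      have hstrict : a.1 + a.2 < g.1 + g.2 := by
        rcases Prod.lt_iff.mp hag with ⟨hs, hl⟩ | ⟨hl, hs⟩ <;> omega
      have hmeas : (b.1 + b.2 - g.1 - g.2).toNat ≤ k := by omega
      obtain ⟨n, f, hf, hf0, hfn⟩ := ih g hgS b hb hgb hmeas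
      refine ⟨n + 1, fun i => if i = 0 then a else f (i - 1), ?_, by simp, ?_⟩
      · refine ⟨?_, ?_, ?_⟩
        · intro i hi
          by_cases h0 : i = 0
          · simp [h0, ha]
          · simp only [if_neg h0]
            exact hf.1 (i - 1) (by omega)
        · intro i hi
          by_cases h0 : i = 0
          · subst h0
            simp only [if_pos rfl, if_neg one_ne_zero]
            rw [show (1 : ℕ) - 1 = 0 from rfl, hf0]
            exact hag
          · simp only [if_neg h0, if_neg (Nat.succ_ne_zero i)]
            rw [show i + 1 - 1 = (i - 1) + 1 by omega]
            exact hf.2.1 (i - 1) (by omega)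
        · intro i hi c hc
          by_cases h0 : i = 0
          · subst h0
            simp only [if_pos rfl, if_neg one_ne_zero]
            rw [show (1 : ℕ) - 1 = 0 from rfl, hf0]
            exact hcov c hc
          · simp only [if_neg h0, if_neg (Nat.succ_ne_zero i)]
            rw [show i + 1 - 1 = (i - 1) + 1 by omega]
            exact hf.2.2 (i - 1) (by omega) c hc
      · simp only [if_neg (Nat.succ_ne_zero n)]
        rw [show n + 1 - 1 = n from rfl, hfn]

lemma chainDist_spec_s3 {S : Set Z2} (hsub : S ⊆ orth) (hmin : MinClosed S) (hG3 : G3P S)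
    {a b : Z2} (ha : a ∈ S) (hb : b ∈ S) (hab : a ≤ b) :
    ((chainDist S a b : ℕ) : ℤ) = rk S b - rk S a := by
  obtain ⟨n₀, f₀, hf₀, h0, hn⟩ := exists_satchain hsub hmin hG3
    (b.1 + b.2 - a.1 - a.2).toNat a ha b hb hab le_rfl
  have hval : ∀ (n : ℕ) (f : ℕ → Z2), IsSatChain S n f → f 0 = a → f n = b →
      (n : ℤ) = rk S b - rk S a := by
    intro n f hf h0' hn'
    have := satchain_rk hsub hmin hG3 hf n le_rfl
    rw [h0', hn'] at this
    omega
  have hset : {n : ℕ | ∃ f, IsSatChain S n f ∧ f 0 = a ∧ f n = b} = {n₀} := by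
    ext n
    simp only [Set.mem_setOf_eq, Set.mem_singleton_iff]
    constructor
    · rintro ⟨f, hf, h1, h2⟩
      have e1 := hval n f hf h1 h2
      have e2 := hval n₀ f₀ hf₀ h0 hn
      omega
    · rintro rfl
      exact ⟨f₀, hf₀, h0, hn⟩
  rw [chainDist, hset, csSup_singleton]
  exact hval n₀ f₀ hf₀ h0 hn

lemma rk_zero {S : Set Z2} (hsub : S ⊆ orth) : rk S 0 = 0 := by
  have h1 : ∀ T : Set ℤ, nvv T 0 = 0 := by
    intro T
    simp [nvv, Set.Ico_self]
  have h2 : mvv S 0 = 0 := by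
    have : Af S ∩ boxx (0 : Z2) = ∅ := by
      apply Set.eq_empty_iff_forall_notMem.mpr
      rintro m ⟨hmA, hb1, hb2⟩
      have := (hsub hmA.1).1
      have h0 : (0 : Z2).1 = (0 : ℤ) := rfl
      omega
    simp [mvv, this]
  simp [rk, h1, h2]

end Chains

section OrthFacts

lemma orth_sub : orth ⊆ orth := fun _ h => h

lemma orth_zero : (0 : Z2) ∈ orth := ⟨le_refl 0, le_refl 0⟩

lemma orth_minclosed : MinClosed orth := by
  intro a ha b hb
  exact ⟨le_inf ha.1 hb.1, le_inf ha.2 hb.2⟩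

lemma orth_G3 : G3P orth := by
  intro a ha b hb _
  constructor
  · intro _
    refine ⟨(a.1 + 1, min a.2 b.2), ⟨?_, ?_⟩, ?_, le_refl _, fun _ => rfl⟩
    · have := ha.1; simp only; omega
    · have := ha.2; have := hb.2; simp only; exact le_min ‹0 ≤ a.2› ‹0 ≤ b.2›
    · simp only; omega
  · intro _
    refine ⟨(min a.1 b.1, a.2 + 1), ⟨?_, ?_⟩, ?_, le_refl _, fun _ => rfl⟩
    · have := ha.1; have := hb.1; simp only; exact le_min ‹0 ≤ a.1› ‹0 ≤ b.1›
    · have := ha.2; simp only; omega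
    · simp only; omega

lemma orth_fst : Prod.fst '' orth = Set.Ici 0 := by
  apply Set.Subset.antisymm
  · rintro x ⟨a, ha, rfl⟩; exact ha.1
  · intro x hx; exact ⟨(x, 0), ⟨hx, le_refl 0⟩, rfl⟩

lemma orth_snd : Prod.snd '' orth = Set.Ici 0 := by
  apply Set.Subset.antisymm
  · rintro x ⟨a, ha, rfl⟩; exact ha.2
  · intro x hx; exact ⟨(0, x), ⟨le_refl 0, hx⟩, rfl⟩

lemma af_orth : Af orth = ∅ := by
  apply Set.eq_empty_iff_forall_notMem.mpr
  rintro a ⟨ha, hd⟩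
  have : (a.1 + 1, a.2) ∈ orth ∩ DeltaUp a := by
    refine ⟨⟨?_, ?_⟩, Or.inr ⟨rfl, ?_⟩⟩
    · have := ha.1; simp only; omega
    · exact ha.2
    · simp only; omega
  rw [hd] at this
  exact this

lemma rk_orth {α : Z2} (hα : α ∈ orth) : rk orth α = α.1 + α.2 := by
  have hn : ∀ x : ℤ, 0 ≤ x → (nvv (Set.Ici 0) x : ℤ) = x := by
    intro x hx
    have : Set.Ici (0:ℤ) ∩ Set.Ico 0 x = Set.Ico 0 x :=
      Set.inter_eq_self_of_subset_right (fun t ht => ht.1)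
    rw [nvv, this, ← Finset.coe_Ico, Set.ncard_coe_finset, Int.card_Ico]
    omega
  have hm : mvv orth α = 0 := by simp [mvv, af_orth]
  rw [rk, orth_fst, orth_snd, hn α.1 hα.1, hn α.2 hα.2, hm]
  ring

lemma minEl_eq_zero {E : Set Z2} (h0 : (0 : Z2) ∈ E) (hsub : E ⊆ orth) :
    minEl E = 0 := by
  have f1 : sInf (Prod.fst '' E) = 0 := by
    apply le_antisymm
    · exact csInf_le ⟨0, by rintro x ⟨c, hc, rfl⟩; exact (hsub hc).1⟩ ⟨0, h0, rfl⟩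
    · exact le_csInf ⟨0, 0, h0, rfl⟩ (by rintro x ⟨c, hc, rfl⟩; exact (hsub hc).1)
  have f2 : sInf (Prod.snd '' E) = 0 := by
    apply le_antisymm
    · exact csInf_le ⟨0, by rintro x ⟨c, hc, rfl⟩; exact (hsub hc).2⟩ ⟨0, h0, rfl⟩
    · exact le_csInf ⟨0, 0, h0, rfl⟩ (by rintro x ⟨c, hc, rfl⟩; exact (hsub hc).2)
  rw [minEl, f1, f2]
  rfl

end OrthFacts

section LargeAlpha

variable {S : Set Z2}

/-- Large-α value of the first gap count. -/
lemma nvv_large_fst (hsub : S ⊆ orth) {c : Z2} (hcS : ∀ y : Z2, c ≤ y → y ∈ S)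
    {x : ℤ} (hx : c.1 ≤ x) (hx0 : 0 ≤ x) :
    (nvv (Prod.fst '' S) x : ℤ) = x - ({t : ℤ | 0 ≤ t ∧ t ∉ Prod.fst '' S}.ncard : ℤ) := by
  set Gp := {t : ℤ | 0 ≤ t ∧ t ∉ Prod.fst '' S} with hGp
  have hGsub : Gp ⊆ Set.Ico 0 x := by
    rintro t ⟨ht0, htn⟩
    refine ⟨ht0, ?_⟩
    by_contra hge
    push_neg at hge
    exact htn ⟨(t, c.2), hcS (t, c.2) ⟨by simpa using le_trans hx hge, le_refl _⟩, rfl⟩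
  have hGfin : Gp.Finite := (Set.finite_Ico 0 x).subset hGsub
  have hsplit : Set.Ico 0 x = (Prod.fst '' S ∩ Set.Ico 0 x) ∪ Gp := by
    apply Set.Subset.antisymm
    · intro t ht
      by_cases hts : t ∈ Prod.fst '' S
      · exact Or.inl ⟨hts, ht⟩
      · exact Or.inr ⟨ht.1, hts⟩
    · rintro t (⟨-, ht⟩ | ht)
      · exact ht
      · exact hGsub ht
  have hdisj : Disjoint (Prod.fst '' S ∩ Set.Ico 0 x) Gp := by
    apply Set.disjoint_left.mpr
    rintro t ⟨ht, -⟩ ⟨-, htn⟩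
    exact htn ht
  have hcards : (Set.Ico (0:ℤ) x).ncard = nvv (Prod.fst '' S) x + Gp.ncard := by
    rw [hsplit, Set.ncard_union_eq hdisj (nvv_finite _ 0 x) hGfin]; rfl
  rw [← Finset.coe_Ico, Set.ncard_coe_finset, Int.card_Ico] at hcards
  omega

lemma nvv_large_snd (hsub : S ⊆ orth) {c : Z2} (hcS : ∀ y : Z2, c ≤ y → y ∈ S)
    {x : ℤ} (hx : c.2 ≤ x) (hx0 : 0 ≤ x) :
    (nvv (Prod.snd '' S) x : ℤ) = x - ({t : ℤ | 0 ≤ t ∧ t ∉ Prod.snd '' S}.ncard : ℤ) := by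
  set Gp := {t : ℤ | 0 ≤ t ∧ t ∉ Prod.snd '' S} with hGp
  have hGsub : Gp ⊆ Set.Ico 0 x := by
    rintro t ⟨ht0, htn⟩
    refine ⟨ht0, ?_⟩
    by_contra hge
    push_neg at hge
    exact htn ⟨(c.1, t), hcS (c.1, t) ⟨le_refl _, by simpa using le_trans hx hge⟩, rfl⟩
  have hGfin : Gp.Finite := (Set.finite_Ico 0 x).subset hGsub
  have hsplit : Set.Ico 0 x = (Prod.snd '' S ∩ Set.Ico 0 x) ∪ Gp := by
    apply Set.Subset.antisymm
    · intro t ht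
      by_cases hts : t ∈ Prod.snd '' S
      · exact Or.inl ⟨hts, ht⟩
      · exact Or.inr ⟨ht.1, hts⟩
    · rintro t (⟨-, ht⟩ | ht)
      · exact ht
      · exact hGsub ht
  have hdisj : Disjoint (Prod.snd '' S ∩ Set.Ico 0 x) Gp := by
    apply Set.disjoint_left.mpr
    rintro t ⟨ht, -⟩ ⟨-, htn⟩
    exact htn ht
  have hcards : (Set.Ico (0:ℤ) x).ncard = nvv (Prod.snd '' S) x + Gp.ncard := by
    rw [hsplit, Set.ncard_union_eq hdisj (nvv_finite _ 0 x) hGfin]; rfl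
  rw [← Finset.coe_Ico, Set.ncard_coe_finset, Int.card_Ico] at hcards
  omega

lemma af_sub_boxx {c : Z2} (hcS : ∀ y : Z2, c ≤ y → y ∈ S) : Af S ⊆ boxx c := by
  intro m hm
  constructor
  · by_contra hge
    push_neg at hge
    have heS : (m.1, max (m.2 + 1) c.2) ∈ S :=
      hcS _ ⟨by simpa using hge, by simp⟩
    exact absurd (af_not_delta hm heS (Or.inl ⟨rfl, by simp only; omega⟩)) not_false
  · by_contra hge
    push_neg at hge
    have heS : (max (m.1 + 1) c.1, m.2) ∈ S :=
      hcS _ ⟨by simp, by simpa using hge⟩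
    exact absurd (af_not_delta hm heS (Or.inr ⟨rfl, by simp only; omega⟩)) not_false

lemma mvv_large {c : Z2} (hcS : ∀ y : Z2, c ≤ y → y ∈ S) {α : Z2} (hα : c ≤ α) :
    mvv S α = (Af S).ncard := by
  have : Af S ∩ boxx α = Af S := by
    apply Set.inter_eq_self_of_subset_left
    intro m hm
    have := af_sub_boxx hcS hm
    obtain ⟨h1, h2⟩ := Prod.le_def.mp hα
    exact ⟨by have := this.1; omega, by have := this.2; omega⟩
  rw [mvv, this]

lemma rk_large (hsub : S ⊆ orth) {c : Z2} (hcS : ∀ y : Z2, c ≤ y → y ∈ S)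
    (hc0 : (0 : Z2) ≤ c) {α : Z2} (hα : c ≤ α) :
    rk S α = α.1 + α.2
      - ({t : ℤ | 0 ≤ t ∧ t ∉ Prod.fst '' S}.ncard : ℤ)
      - ({t : ℤ | 0 ≤ t ∧ t ∉ Prod.snd '' S}.ncard : ℤ)
      - ((Af S).ncard : ℤ) := by
  obtain ⟨h1, h2⟩ := Prod.le_def.mp hα
  obtain ⟨h01, h02⟩ := Prod.le_def.mp hc0
  rw [rk, nvv_large_fst hsub hcS h1 (le_trans h01 h1),
    nvv_large_snd hsub hcS h2 (le_trans h02 h2), mvv_large hcS hα]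
  ring

end LargeAlpha

/-- For a local good semigroup `S ⊆ ℕ²` with coordinate
projections `S₁, S₂`, one has `g(S) = g(S₁) + g(S₂) + |A_f(S)|`. -/
theorem genus_eq_proj_gaps_add_card_finite_maximals (S : Set Z2)
    (hS : IsGood S) (hl : IsLocal S) :
    genus S = ({x : ℤ | 0 ≤ x ∧ x ∉ Prod.fst '' S}.ncard : ℤ)
            + ({x : ℤ | 0 ≤ x ∧ x ∉ Prod.snd '' S}.ncard : ℤ)
            + ((Af S).ncard : ℤ) := by
  obtain ⟨hsub, h0S, hadd, hmin, ⟨δ, hδ⟩, hG3⟩ := hS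
  set c : Z2 := (max δ.1 0, max δ.2 0) with hc
  have hcS : ∀ y : Z2, c ≤ y → y ∈ S := by
    intro y hy
    apply hδ
    refine le_trans (Prod.le_def.mpr ⟨?_, ?_⟩) hy <;> simp [hc]
  have hc0 : (0 : Z2) ≤ c := Prod.le_def.mpr ⟨by simp [hc], by simp [hc]⟩
  set G : ℤ := ({x : ℤ | 0 ≤ x ∧ x ∉ Prod.fst '' S}.ncard : ℤ)
            + ({x : ℤ | 0 ≤ x ∧ x ∉ Prod.snd '' S}.ncard : ℤ)
            + ((Af S).ncard : ℤ) with hG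
  have hkey : ∀ α ∈ S, c ≤ α →
      (chainDist orth (minEl orth) α : ℤ) - (chainDist S (minEl S) α : ℤ) = G := by
    intro α hα hcα
    have hα0 : (0 : Z2) ≤ α := le_trans hc0 hcα
    have hαo : α ∈ orth := hsub hα
    rw [minEl_eq_zero orth_zero orth_sub, minEl_eq_zero h0S hsub,
      chainDist_spec_s3 orth_sub orth_minclosed orth_G3 orth_zero hαo hα0,
      chainDist_spec_s3 hsub hmin hG3 h0S hα hα0,
      rk_zero orth_sub, rk_zero hsub, rk_orth hαo, rk_large hsub hcS hc0 hcα, hG]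
    ring
  have hset : {z : ℤ | ∃ β : Z2, ∀ α ∈ S, β ≤ α →
      (chainDist orth (minEl orth) α : ℤ) - (chainDist S (minEl S) α : ℤ) = z} = {G} := by
    ext z
    simp only [Set.mem_setOf_eq, Set.mem_singleton_iff]
    constructor
    · rintro ⟨β, hβ⟩
      set α : Z2 := (max β.1 c.1, max β.2 c.2) with hα
      have hαc : c ≤ α := Prod.le_def.mpr ⟨by simp [hα], by simp [hα]⟩
      have hαS : α ∈ S := hcS α hαc
      have h1 := hβ α hαS (Prod.le_def.mpr ⟨by simp [hα], by simp [hα]⟩)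
      rw [hkey α hαS hαc] at h1
      exact h1.symm
    · rintro rfl
      exact ⟨c, fun α hα hcα => hkey α hα hcα⟩
  rw [genus, dist2, hset, csSup_singleton]
end
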